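/- arXiv:1203.4322 — 3 statements merged into one kernel-verified Lean document; each statement's English description precedes it below -/
import Mathlib

section
/- Let P be a multiset of N points in [0,1)^s and r ∈ ℕ. If the dual set D_r(P) = {k ∈ {0,...,b^r-1}^s : ∑_{h} wal_k(x_h) ≠ 0} equals {0}, then every elementary interval E_a, a ∈ {0,...,b^r-1}^s, contains exactly N b^{-rs} points of P; in particular b^{rs} divides N. Consequently, if b^{rs} > N then D_r(P) ≠ {0}. -/
/-- The `i`-th base-`b` digit (`i ≥ 1`) of a real number `x ∈ [0,1)`. -/
noncomputable def rdigit (b : ℕ) (x : ℝ) (i : ℕ) : ℤ := ⌊x * (b : ℝ) ^ i⌋ % (b : ℤ)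

/-- The `k`-th `b`-adic Walsh function. -/
noncomputable def wal (b k : ℕ) (x : ℝ) : ℂ :=
  Complex.exp ((2 * Real.pi * Complex.I / (b : ℂ)) *
    ((∑ j ∈ Finset.range k, rdigit b x (j + 1) * ((k / b ^ j % b : ℕ) : ℤ) : ℤ) : ℂ))

/-- The `s`-dimensional `b`-adic Walsh function. -/
noncomputable def walVec (b : ℕ) {s : ℕ} (k : Fin s → ℕ) (x : Fin s → ℝ) : ℂ :=
  ∏ j, wal b (k j) (x j)

/-! ### Auxiliary machinery -/

noncomputable def eb (b : ℕ) (n : ℤ) : ℂ :=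
  Complex.exp ((2 * Real.pi * Complex.I / (b : ℂ)) * (n : ℂ))

def Bp (b r k m : ℕ) : ℤ :=
  ∑ j ∈ Finset.range r, ((m / b ^ (r - 1 - j) % b : ℕ) : ℤ) * ((k / b ^ j % b : ℕ) : ℤ)

noncomputable def mIdx (b r : ℕ) (x : ℝ) : ℕ := (⌊x * (b : ℝ) ^ r⌋).toNat

lemma eb_zero (b : ℕ) : eb b 0 = 1 := by simp [eb]

lemma eb_add (b : ℕ) (m n : ℤ) : eb b (m + n) = eb b m * eb b n := by
  simp [eb, ← Complex.exp_add, mul_add]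

lemma eb_sum (b : ℕ) {ι : Type*} (s : Finset ι) (g : ι → ℤ) :
    eb b (∑ j ∈ s, g j) = ∏ j ∈ s, eb b (g j) := by
  classical
  induction s using Finset.cons_induction with
  | empty => simp [eb_zero]
  | cons j s hj ih => rw [Finset.sum_cons, eb_add, ih, Finset.prod_cons]

lemma eb_pow (b : ℕ) (c : ℤ) (t : ℕ) : eb b (c * t) = eb b c ^ t := by
  rw [eb, eb, ← Complex.exp_nat_mul]
  congr 1
  push_cast
  ring

lemma eb_eq_one_iff {b : ℕ} (hb : 2 ≤ b) (n : ℤ) : eb b n = 1 ↔ (b : ℤ) ∣ n := by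
  have hbne : (b : ℂ) ≠ 0 := (Nat.cast_ne_zero (R := ℂ)).mpr (by omega)
  have h2 : (2 * (Real.pi : ℂ) * Complex.I) ≠ 0 := by
    simp [Real.pi_ne_zero, Complex.I_ne_zero]
  rw [eb, Complex.exp_eq_one_iff]
  constructor
  · rintro ⟨m, hm⟩
    field_simp at hm
    have : ((n : ℂ)) = (m : ℂ) * b := by
      apply mul_left_cancel₀ h2
      rw [hm]; ring
    have hn : n = m * b := by exact_mod_cast this
    exact ⟨m, by rw [hn]; ring⟩
  · rintro ⟨m, rfl⟩
    exact ⟨m, by field_simp; push_cast <;> ring⟩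

lemma eb_geom {b : ℕ} (hb : 2 ≤ b) (c : ℤ) :
    ∑ t ∈ Finset.range b, eb b (c * t) = if (b : ℤ) ∣ c then (b : ℂ) else 0 := by
  split_ifs with h
  · have : ∀ t ∈ Finset.range b, eb b (c * t) = 1 := by
      intro t _
      exact (eb_eq_one_iff hb _).mpr (Dvd.dvd.mul_right h _)
    rw [Finset.sum_congr rfl this]
    simp
  · have hz : eb b c ≠ 1 := fun h1 => h ((eb_eq_one_iff hb _).mp h1)
    have he : ∑ t ∈ Finset.range b, eb b (c * t) = ∑ t ∈ Finset.range b, (eb b c) ^ t :=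
      Finset.sum_congr rfl fun t _ => eb_pow b c t
    rw [he, geom_sum_eq hz]
    have : eb b c ^ b = 1 := by
      rw [← eb_pow]
      exact (eb_eq_one_iff hb _).mpr ⟨c, by ring⟩
    rw [this]
    simp

lemma sum_pow_factor {b : ℕ} (hb : 2 ≤ b) (n : ℕ) (f : ℕ → ℕ → ℂ) :
    ∑ k ∈ Finset.range (b ^ n), ∏ j ∈ Finset.range n, f j (k / b ^ j % b)
      = ∏ j ∈ Finset.range n, ∑ t ∈ Finset.range b, f j t := by
  induction n generalizing f with
  | zero => simp
  | succ n ih =>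
    have hb0 : 0 < b := by omega
    have hsplit : ∑ k ∈ Finset.range (b ^ (n + 1)), ∏ j ∈ Finset.range (n + 1), f j (k / b ^ j % b)
        = ∑ p ∈ Finset.range b ×ˢ Finset.range (b ^ n),
            ∏ j ∈ Finset.range (n + 1), f j ((p.1 + b * p.2) / b ^ j % b) := by
      refine Finset.sum_nbij' (fun k => (k % b, k / b)) (fun p => p.1 + b * p.2) ?_ ?_ ?_ ?_ ?_
      · intro k hk
        simp only [Finset.mem_range] at hk ⊢
        simp only [Finset.mem_product, Finset.mem_range]
        exact ⟨Nat.mod_lt _ hb0, Nat.div_lt_of_lt_mul (by rwa [← pow_succ'] )⟩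
      · intro p hp
        simp only [Finset.mem_product, Finset.mem_range] at hp
        simp only [Finset.mem_range]
        calc p.1 + b * p.2 < b + b * p.2 := by omega
          _ ≤ b * (p.2 + 1) := by ring_nf; omega
          _ ≤ b * b ^ n := Nat.mul_le_mul_left _ (by omega)
          _ = b ^ (n + 1) := (pow_succ' b n).symm
      · intro k _
        exact (Nat.mod_add_div k b)
      · intro p hp
        simp only [Finset.mem_product, Finset.mem_range] at hp
        have h1 : (p.1 + b * p.2) % b = p.1 := by
          rw [Nat.add_mul_mod_self_left, Nat.mod_eq_of_lt hp.1]
        have h2 : (p.1 + b * p.2) / b = p.2 := by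
          rw [Nat.add_mul_div_left _ _ hb0, Nat.div_eq_of_lt hp.1, zero_add]
        simp [h1, h2]
      · intro k _
        rw [Nat.mod_add_div k b]
    rw [hsplit, Finset.sum_product]
    have hterm : ∀ t ∈ Finset.range b, ∀ q ∈ Finset.range (b ^ n),
        ∏ j ∈ Finset.range (n + 1), f j ((t + b * q) / b ^ j % b)
          = f 0 t * ∏ j ∈ Finset.range n, (fun j u => f (j + 1) u) j (q / b ^ j % b) := by
      intro t ht q hq
      simp only [Finset.mem_range] at ht hq
      rw [Finset.prod_range_succ']
      have hdiv : (t + b * q) / b = q := by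
        rw [Nat.add_mul_div_left _ _ hb0, Nat.div_eq_of_lt ht, zero_add]
      have h0 : (t + b * q) / b ^ 0 % b = t := by
        simp [Nat.add_mul_mod_self_left, Nat.mod_eq_of_lt ht]
      rw [h0, mul_comm]
      congr 1
      refine Finset.prod_congr rfl fun j _ => ?_
      have : (t + b * q) / b ^ (j + 1) = q / b ^ j := by
        rw [pow_succ', ← Nat.div_div_eq_div_mul, hdiv]
      rw [this]
    calc ∑ t ∈ Finset.range b, ∑ q ∈ Finset.range (b ^ n),
          ∏ j ∈ Finset.range (n + 1), f j ((t + b * q) / b ^ j % b)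
        = ∑ t ∈ Finset.range b, ∑ q ∈ Finset.range (b ^ n),
            f 0 t * ∏ j ∈ Finset.range n, (fun j u => f (j + 1) u) j (q / b ^ j % b) := by
          refine Finset.sum_congr rfl fun t ht => Finset.sum_congr rfl fun q hq => hterm t ht q hq
      _ = (∑ t ∈ Finset.range b, f 0 t) *
            ∑ q ∈ Finset.range (b ^ n), ∏ j ∈ Finset.range n,
              (fun j u => f (j + 1) u) j (q / b ^ j % b) := by
          rw [Finset.sum_mul]
          refine Finset.sum_congr rfl fun t _ => ?_
          rw [Finset.mul_sum]
      _ = (∑ t ∈ Finset.range b, f 0 t) *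
            ∏ j ∈ Finset.range n, ∑ u ∈ Finset.range b, f (j + 1) u := by rw [ih]
      _ = ∏ j ∈ Finset.range (n + 1), ∑ t ∈ Finset.range b, f j t := by
          rw [Finset.prod_range_succ', mul_comm]

lemma digits_determine {b : ℕ} (hb : 2 ≤ b) :
    ∀ (r m a : ℕ), m < b ^ r → a < b ^ r →
      (∀ j < r, m / b ^ j % b = a / b ^ j % b) → m = a := by
  intro r
  induction r with
  | zero => intro m a hm ha _; simp at hm ha; omega
  | succ r ih =>
    intro m a hm ha h
    have h0 : m % b = a % b := by simpa using h 0 (Nat.succ_pos r)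
    have hd : m / b = a / b := by
      refine ih (m / b) (a / b) ?_ ?_ ?_
      · exact Nat.div_lt_of_lt_mul (by rwa [← pow_succ'])
      · exact Nat.div_lt_of_lt_mul (by rwa [← pow_succ'])
      · intro j hj
        have := h (j + 1) (by omega)
        rwa [pow_succ', ← Nat.div_div_eq_div_mul, ← Nat.div_div_eq_div_mul] at this
    have h1 := Nat.div_add_mod m b
    have h2 := Nat.div_add_mod a b
    rw [hd] at h1
    omega

lemma floor_div_nat_real (a : ℝ) (n : ℕ) (hn : 0 < n) : ⌊a / (n : ℝ)⌋ = ⌊a⌋ / (n : ℤ) := by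
  have hnR : (0 : ℝ) < (n : ℝ) := by exact_mod_cast hn
  have hnZ : (0 : ℤ) < (n : ℤ) := by exact_mod_cast hn
  have hdm := Int.mul_ediv_add_emod ⌊a⌋ (n : ℤ)
  have hm0 : 0 ≤ ⌊a⌋ % (n : ℤ) := Int.emod_nonneg _ (by omega)
  have hm1 : ⌊a⌋ % (n : ℤ) < n := Int.emod_lt_of_pos _ hnZ
  have h1 : (n : ℤ) * (⌊a⌋ / (n : ℤ)) ≤ ⌊a⌋ := by omega
  have h2 : ⌊a⌋ + 1 ≤ (n : ℤ) * (⌊a⌋ / (n : ℤ)) + n := by omega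
  rw [Int.floor_eq_iff]
  constructor
  · rw [le_div_iff₀ hnR]
    calc ((⌊a⌋ / (n : ℤ) : ℤ) : ℝ) * n = (((n : ℤ) * (⌊a⌋ / (n : ℤ)) : ℤ) : ℝ) := by
          push_cast; ring
      _ ≤ (⌊a⌋ : ℝ) := by exact_mod_cast h1
      _ ≤ a := Int.floor_le a
  · rw [div_lt_iff₀ hnR]
    calc a < (⌊a⌋ : ℝ) + 1 := Int.lt_floor_add_one a
      _ = ((⌊a⌋ + 1 : ℤ) : ℝ) := by push_cast; ring
      _ ≤ (((n : ℤ) * (⌊a⌋ / (n : ℤ)) + n : ℤ) : ℝ) := by exact_mod_cast h2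
      _ = ((⌊a⌋ / (n : ℤ) : ℤ) + 1 : ℝ) * n := by push_cast; ring

lemma kappa_high {b : ℕ} (hb : 2 ≤ b) {r k : ℕ} (hk : k < b ^ r) {j : ℕ} (hj : r ≤ j) :
    k / b ^ j % b = 0 := by
  have : k < b ^ j := lt_of_lt_of_le hk (Nat.pow_le_pow_right (by omega) hj)
  rw [Nat.div_eq_of_lt this, Nat.zero_mod]

lemma kappa_big {b : ℕ} (hb : 2 ≤ b) {k j : ℕ} (hj : k ≤ j) : k / b ^ j = 0 := by
  have h2 : k < 2 ^ j := lt_of_le_of_lt hj (Nat.lt_two_pow_self)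
  have : k < b ^ j := lt_of_lt_of_le h2 (Nat.pow_le_pow_left hb j)
  exact Nat.div_eq_of_lt this

lemma mIdx_cast {b r : ℕ} {x : ℝ} (hx : 0 ≤ x) :
    ((mIdx b r x : ℤ)) = ⌊x * (b : ℝ) ^ r⌋ :=
  Int.toNat_of_nonneg (Int.floor_nonneg.mpr (by positivity))

lemma mIdx_lt {b r : ℕ} (hb : 2 ≤ b) {x : ℝ} (hx : x ∈ Set.Ico (0 : ℝ) 1) :
    mIdx b r x < b ^ r := by
  obtain ⟨hx0, hx1⟩ := hx
  have hbp : (0 : ℝ) < (b : ℝ) ^ r := by positivity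
  have hlt : x * (b : ℝ) ^ r < ((b ^ r : ℕ) : ℝ) := by
    push_cast
    nlinarith
  have hfl : ⌊x * (b : ℝ) ^ r⌋ < ((b ^ r : ℕ) : ℤ) := Int.floor_lt.mpr (by exact_mod_cast hlt)
  have := mIdx_cast (b := b) (r := r) hx0
  omega

lemma walA {b : ℕ} (hb : 2 ≤ b) (r k : ℕ) (hk : k < b ^ r) {x : ℝ}
    (hx : x ∈ Set.Ico (0 : ℝ) 1) :
    wal b k x = eb b (Bp b r k (mIdx b r x)) := by
  obtain ⟨hx0, hx1⟩ := hx
  have hbR : (0 : ℝ) < b := by positivity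
  have hmz : ((mIdx b r x : ℤ)) = ⌊x * (b : ℝ) ^ r⌋ := mIdx_cast hx0
  have key : ∀ j < r, rdigit b x (j + 1) = ((mIdx b r x / b ^ (r - 1 - j) % b : ℕ) : ℤ) := by
    intro j hj
    have hsplit : (b : ℝ) ^ r = (b : ℝ) ^ (j + 1) * (b : ℝ) ^ (r - 1 - j) := by
      rw [← pow_add]; congr 1; omega
    have hpos : 0 < b ^ (r - 1 - j) := Nat.pow_pos (by omega)
    have hxr : x * (b : ℝ) ^ (j + 1) = (x * (b : ℝ) ^ r) / ((b ^ (r - 1 - j) : ℕ) : ℝ) := by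
      rw [hsplit]
      push_cast
      field_simp
    rw [rdigit, hxr, floor_div_nat_real _ _ hpos, ← hmz]
    push_cast
    rfl
  have hgoal : (∑ j ∈ Finset.range k, rdigit b x (j + 1) * ((k / b ^ j % b : ℕ) : ℤ))
      = Bp b r k (mIdx b r x) := by
    set M := max k r with hM
    have e1 : (∑ j ∈ Finset.range k, rdigit b x (j + 1) * ((k / b ^ j % b : ℕ) : ℤ))
        = ∑ j ∈ Finset.range M, rdigit b x (j + 1) * ((k / b ^ j % b : ℕ) : ℤ) := by
      refine Finset.sum_subset (Finset.range_subset_range.mpr (le_max_left _ _)) ?_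
      intro j hjM hjk
      simp only [Finset.mem_range, not_lt] at hjk
      rw [kappa_big hb hjk]
      simp
    have e2 : Bp b r k (mIdx b r x)
        = ∑ j ∈ Finset.range M,
            ((mIdx b r x / b ^ (r - 1 - j) % b : ℕ) : ℤ) * ((k / b ^ j % b : ℕ) : ℤ) := by
      refine Finset.sum_subset (Finset.range_subset_range.mpr (le_max_right _ _)) ?_
      intro j hjM hjr
      simp only [Finset.mem_range, not_lt] at hjr
      rw [kappa_high hb hk hjr]
      simp
    rw [e1, e2]
    refine Finset.sum_congr rfl fun j hj => ?_
    by_cases hjr : j < r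
    · rw [key j hjr]
    · push_neg at hjr
      rw [kappa_high hb hk hjr]
      simp
  rw [wal, eb, hgoal]

lemma orth1 {b : ℕ} (hb : 2 ≤ b) (r : ℕ) {m a : ℕ} (hm : m < b ^ r) (ha : a < b ^ r) :
    ∑ t ∈ Finset.range (b ^ r), eb b (Bp b r t m - Bp b r t a)
      = if m = a then ((b : ℂ)) ^ r else 0 := by
  have hstep : ∀ t : ℕ, Bp b r t m - Bp b r t a
      = ∑ j ∈ Finset.range r,
          (((m / b ^ (r - 1 - j) % b : ℕ) : ℤ) - ((a / b ^ (r - 1 - j) % b : ℕ) : ℤ))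
            * ((t / b ^ j % b : ℕ) : ℤ) := by
    intro t
    rw [Bp, Bp, ← Finset.sum_sub_distrib]
    exact Finset.sum_congr rfl fun j _ => by ring
  have hfact : ∑ t ∈ Finset.range (b ^ r), eb b (Bp b r t m - Bp b r t a)
      = ∏ j ∈ Finset.range r, ∑ u ∈ Finset.range b,
          eb b ((((m / b ^ (r - 1 - j) % b : ℕ) : ℤ) - ((a / b ^ (r - 1 - j) % b : ℕ) : ℤ)) * u) := by
    rw [← sum_pow_factor hb r (fun j u =>
      eb b ((((m / b ^ (r - 1 - j) % b : ℕ) : ℤ) - ((a / b ^ (r - 1 - j) % b : ℕ) : ℤ)) * u))]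
    refine Finset.sum_congr rfl fun t _ => ?_
    rw [hstep t, eb_sum]
  rw [hfact]
  by_cases hma : m = a
  · subst hma
    rw [if_pos rfl]
    have : ∀ j ∈ Finset.range r, ∑ u ∈ Finset.range b,
        eb b ((((m / b ^ (r - 1 - j) % b : ℕ) : ℤ) - ((m / b ^ (r - 1 - j) % b : ℕ) : ℤ)) * u)
          = (b : ℂ) := by
      intro j _
      simp [sub_self, eb_zero]
    rw [Finset.prod_congr rfl this, Finset.prod_const, Finset.card_range]
  · rw [if_neg hma]
    have hdig : ∃ j, j < r ∧ m / b ^ j % b ≠ a / b ^ j % b := by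
      by_contra hcon
      push_neg at hcon
      exact hma (digits_determine hb r m a hm ha hcon)
    obtain ⟨j0, hj0r, hne⟩ := hdig
    have hj' : r - 1 - j0 < r := by omega
    have hidx : r - 1 - (r - 1 - j0) = j0 := by omega
    refine Finset.prod_eq_zero (Finset.mem_range.mpr hj') ?_
    rw [hidx, eb_geom hb, if_neg]
    intro hdvd
    have h1 : m / b ^ j0 % b < b := Nat.mod_lt _ (by omega)
    have h2 : a / b ^ j0 % b < b := Nat.mod_lt _ (by omega)
    have := Int.eq_zero_of_abs_lt_dvd hdvd (by rw [abs_lt]; constructor <;> omega)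
    omega

/-- If the dual set `D_r(P)` equals `{0}` (all Walsh coefficients `c_k` with `k ≠ 0` vanish),
then every elementary interval `E_a` contains exactly `N b^{-rs}` points of `P`, and in
particular `b^{rs}` divides `N`.  Consequently, if `b^{rs} > N` then `D_r(P) ≠ {0}`. -/
theorem trivial_dual_set (b r s N : ℕ) (hb : 2 ≤ b) (hr : 1 ≤ r) (hs : 1 ≤ s) (hN : 1 ≤ N)
    (P : Fin N → Fin s → ℝ) (hP : ∀ h j, P h j ∈ Set.Ico (0 : ℝ) 1) :
    ((∀ k : Fin s → Fin (b ^ r), (∃ j, (k j : ℕ) ≠ 0) →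
        ∑ h, walVec b (fun j => (k j : ℕ)) (P h) = 0) →
      (∀ a : Fin s → Fin (b ^ r),
        (Finset.univ.filter
          (fun h : Fin N => ∀ j, ⌊P h j * (b : ℝ) ^ r⌋ = ((a j : ℕ) : ℤ))).card * b ^ (r * s)
          = N) ∧ b ^ (r * s) ∣ N) ∧
    (N < b ^ (r * s) →
      ¬ (∀ k : Fin s → Fin (b ^ r), (∃ j, (k j : ℕ) ≠ 0) →
          ∑ h, walVec b (fun j => (k j : ℕ)) (P h) = 0)) := by
  classical
  have hbr : 0 < b ^ r := Nat.pow_pos (by omega)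
  have main : (∀ k : Fin s → Fin (b ^ r), (∃ j, (k j : ℕ) ≠ 0) →
        ∑ h, walVec b (fun j => (k j : ℕ)) (P h) = 0) →
      ∀ a : Fin s → Fin (b ^ r),
        (Finset.univ.filter
          (fun h : Fin N => ∀ j, ⌊P h j * (b : ℝ) ^ r⌋ = ((a j : ℕ) : ℤ))).card * b ^ (r * s)
          = N := by
    intro hD a
    have hwal : ∀ (k : Fin s → Fin (b ^ r)) h,
        walVec b (fun j => (k j : ℕ)) (P h) = ∏ j, eb b (Bp b r (k j) (mIdx b r (P h j))) := by
      intro k h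
      exact Finset.prod_congr rfl fun j _ => walA hb r (k j) (k j).isLt (hP h j)
    set T : ℂ := ∑ k : Fin s → Fin (b ^ r),
        (∏ j, eb b (-Bp b r (k j) (a j))) * ∑ h, walVec b (fun j => (k j : ℕ)) (P h) with hT
    set k0 : Fin s → Fin (b ^ r) := fun _ => ⟨0, hbr⟩ with hk0
    have hT1 : T = N := by
      rw [hT, Finset.sum_eq_single k0]
      · have h1 : ∀ j : Fin s, Bp b r ((k0 j : ℕ)) ((a j : ℕ)) = 0 := by
          intro j
          rw [Bp]
          refine Finset.sum_eq_zero fun i _ => ?_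
          simp [hk0]
        have h2 : ∀ h, walVec b (fun j => ((k0 j : ℕ))) (P h) = 1 := by
          intro h
          rw [walVec]
          refine Finset.prod_eq_one fun j _ => ?_
          show wal b 0 (P h j) = 1
          rw [wal]
          simp
        simp [h1, h2, eb_zero]
      · intro k _ hk
        have : ∃ j, (k j : ℕ) ≠ 0 := by
          by_contra hcon
          push_neg at hcon
          exact hk (funext fun j => Fin.ext (by simpa [hk0] using hcon j))
        rw [hD k this, mul_zero]
      · intro hmem
        exact absurd (Finset.mem_univ k0) hmem
    have hT2 : T = ((Finset.univ.filter
        (fun h : Fin N => ∀ j, mIdx b r (P h j) = (a j : ℕ))).card : ℂ) * ((b : ℂ) ^ r) ^ s := by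
      have e1 : ∀ k : Fin s → Fin (b ^ r),
          (∏ j, eb b (-Bp b r (k j) (a j))) * ∑ h, walVec b (fun j => (k j : ℕ)) (P h)
            = ∑ h, ∏ j, eb b (Bp b r (k j) (mIdx b r (P h j)) - Bp b r (k j) (a j)) := by
        intro k
        rw [Finset.mul_sum]
        refine Finset.sum_congr rfl fun h _ => ?_
        rw [hwal k h, ← Finset.prod_mul_distrib]
        refine Finset.prod_congr rfl fun j _ => ?_
        rw [← eb_add]
        congr 1
        ring
      rw [hT, Finset.sum_congr rfl fun k _ => e1 k, Finset.sum_comm]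
      have e2 : ∀ h, ∑ k : Fin s → Fin (b ^ r),
          ∏ j, eb b (Bp b r (k j) (mIdx b r (P h j)) - Bp b r (k j) (a j))
            = ∏ j, ∑ t ∈ Finset.range (b ^ r),
                eb b (Bp b r t (mIdx b r (P h j)) - Bp b r t (a j)) := by
        intro h
        rw [← Fintype.prod_sum
          (fun j (t : Fin (b ^ r)) => eb b (Bp b r t (mIdx b r (P h j)) - Bp b r t (a j)))]
        refine Finset.prod_congr rfl fun j _ => ?_
        exact Fin.sum_univ_eq_sum_range
          (fun t : ℕ => eb b (Bp b r t (mIdx b r (P h j)) - Bp b r t (a j))) (b ^ r)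
      rw [Finset.sum_congr rfl fun h _ => e2 h]
      have e3 : ∀ h, ∏ j, (∑ t ∈ Finset.range (b ^ r),
          eb b (Bp b r t (mIdx b r (P h j)) - Bp b r t (a j)))
            = if (∀ j, mIdx b r (P h j) = (a j : ℕ)) then ((b : ℂ) ^ r) ^ s else 0 := by
        intro h
        rw [Finset.prod_congr rfl fun j _ =>
          orth1 hb r (mIdx_lt hb (hP h j)) (a j).isLt]
        by_cases hall : ∀ j, mIdx b r (P h j) = (a j : ℕ)
        · rw [if_pos hall, Finset.prod_congr rfl fun j _ => if_pos (hall j),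
            Finset.prod_const, Finset.card_univ, Fintype.card_fin]
        · rw [if_neg hall]
          push_neg at hall
          obtain ⟨j, hj⟩ := hall
          exact Finset.prod_eq_zero (Finset.mem_univ j) (if_neg hj)
      rw [Finset.sum_congr rfl fun h _ => e3 h, ← Finset.sum_filter, Finset.sum_const,
        nsmul_eq_mul]
    have hcount : ((Finset.univ.filter
        (fun h : Fin N => ∀ j, mIdx b r (P h j) = (a j : ℕ))).card : ℂ) * ((b : ℂ) ^ r) ^ s
          = (N : ℂ) := by
      rw [← hT2, hT1]
    have hpred : (Finset.univ.filter
        (fun h : Fin N => ∀ j, ⌊P h j * (b : ℝ) ^ r⌋ = ((a j : ℕ) : ℤ)))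
          = Finset.univ.filter (fun h : Fin N => ∀ j, mIdx b r (P h j) = (a j : ℕ)) := by
      refine Finset.filter_congr fun h _ => ?_
      refine forall_congr' fun j => ?_
      rw [← mIdx_cast (hP h j).1]
      exact_mod_cast Iff.rfl
    rw [hpred]
    have := hcount
    rw [← pow_mul] at this
    exact_mod_cast this
  refine ⟨fun hD => ⟨main hD, ?_⟩, ?_⟩
  · exact ⟨_, ((main hD (fun _ => ⟨0, hbr⟩)).symm.trans (mul_comm _ _))⟩
  · intro hlt hD
    have hdvd : b ^ (r * s) ∣ N := ⟨_, ((main hD (fun _ => ⟨0, hbr⟩)).symm.trans (mul_comm _ _))⟩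
    have := Nat.le_of_dvd (by omega) hdvd
    omega
end

section
/- A multiset P = {x_0,...,x_{b^m−1}} ⊂ [0,1)^s is a (t,α,β,n,m,s)-net in base b if and only if ρ_α(D_{⌊βn⌋−t}(P)) ≥ ⌊βn⌋ − t + 1, where D_r(P) is the dual set of P with resolution r and ρ_α(Q) = min_{k ∈ Q \ {0}} μ_α(k) (with ρ_α(Q) = r+1 if Q ⊆ {0}). -/
/-- Sum of the `α` largest elements of a finite set of naturals. -/
def topSum (α : ℕ) (T : Finset ℕ) : ℕ := ((T.sort (· ≤ ·)).reverse.take α).sum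

/-- The weight `μ_α(k)`: the sum of the `min(ν,α)` largest base-`b` digit positions of `k`. -/
def muNat (α b k : ℕ) : ℕ :=
  topSum α (((Finset.range k).filter (fun j => k / b ^ j % b ≠ 0)).image (fun j => j + 1))

/-- The weight `μ_α` of a vector `k ∈ ℕ₀^s`. -/
def muNatVec (α b : ℕ) {s : ℕ} (k : Fin s → ℕ) : ℕ := ∑ j, muNat α b (k j)

/-- `P` is a `(t,α,β,n,m,s)`-net in base `b`: every generalised elementary interval
`J(i_ν, a_ν)` whose weight `∑_j ∑_{l=1}^{min(ν_j,α)} i_{j,l}` is at most `βn - t` contains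
exactly `b^{m - |ν|₁}` points of `P`. -/
def IsNet (b t α : ℕ) (β : ℝ) (n m s : ℕ) (P : Fin (b ^ m) → Fin s → ℝ) : Prop :=
  ∀ I : Fin s → Finset (Fin n),
    ((∑ j, topSum α ((I j).image (fun i : Fin n => (i : ℕ) + 1)) : ℕ) : ℝ) ≤ β * n - t →
    ∀ a : Fin s → Fin n → Fin b,
      (Finset.univ.filter (fun h : Fin (b ^ m) =>
          ∀ j : Fin s, ∀ i ∈ I j, rdigit b (P h j) ((i : ℕ) + 1) = ((a j i : ℕ) : ℤ))).card
        * b ^ (∑ j, (I j).card) = b ^ m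

namespace NetAux
open Finset

open Finset

/-! ### Character sums -/

noncomputable def ec (b : ℕ) (c : ℤ) : ℂ :=
  Complex.exp ((2 * Real.pi * Complex.I / (b : ℂ)) * (c : ℂ))

lemma ec_zero (b : ℕ) : ec b 0 = 1 := by simp [ec]

lemma ec_add (b : ℕ) (c d : ℤ) : ec b (c + d) = ec b c * ec b d := by
  rw [ec, ec, ec, ← Complex.exp_add]
  push_cast
  ring_nf

lemma ec_sum {ι : Type*} (b : ℕ) (s : Finset ι) (f : ι → ℤ) :
    ec b (∑ i ∈ s, f i) = ∏ i ∈ s, ec b (f i) := by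
  classical
  induction s using Finset.cons_induction with
  | empty => simp [ec_zero]
  | cons a s ha ih => rw [Finset.sum_cons, Finset.prod_cons, ec_add, ih]

lemma ec_pow (b : ℕ) (c : ℤ) (v : ℕ) : ec b ((v : ℤ) * c) = ec b c ^ v := by
  induction v with
  | zero => simpa using ec_zero b
  | succ v ih =>
      have h : ((v + 1 : ℕ) : ℤ) * c = (v : ℤ) * c + c := by push_cast; ring
      rw [h, ec_add, ih, pow_succ]

lemma ec_eq_one (b : ℕ) (hb : 0 < b) {c : ℤ} (h : (b : ℤ) ∣ c) : ec b c = 1 := by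
  obtain ⟨z, rfl⟩ := h
  have hbne : (b : ℂ) ≠ 0 := Nat.cast_ne_zero.mpr hb.ne'
  have h2 : (2 * (Real.pi : ℂ) * Complex.I / (b : ℂ)) * (((b : ℤ) * z : ℤ) : ℂ)
      = (z : ℂ) * (2 * (Real.pi : ℂ) * Complex.I) := by
    push_cast
    field_simp
  rw [ec, h2, Complex.exp_int_mul_two_pi_mul_I]

lemma ec_ne_one (b : ℕ) (hb : 0 < b) {c : ℤ} (h : ¬ (b : ℤ) ∣ c) : ec b c ≠ 1 := by
  intro heq
  rw [ec, Complex.exp_eq_one_iff] at heq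
  obtain ⟨z, hz⟩ := heq
  have hbne : (b : ℂ) ≠ 0 := Nat.cast_ne_zero.mpr hb.ne'
  have h2 : (2 * (Real.pi : ℂ) * Complex.I) ≠ 0 := by
    simp [Real.pi_ne_zero, Complex.I_ne_zero]
  apply h
  refine ⟨z, ?_⟩
  field_simp at hz
  have h4 : (c : ℂ) = (z : ℂ) * (b : ℂ) := by
    apply mul_left_cancel₀ h2
    linear_combination (2 * (Real.pi : ℂ) * Complex.I) * hz
  exact_mod_cast h4.trans (mul_comm _ _)

lemma sum_ec (b : ℕ) (hb : 0 < b) {c : ℤ} (hc : ¬ (b : ℤ) ∣ c) :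
    ∑ v : Fin b, ec b ((v : ℕ) * c) = 0 := by
  have h1 : ec b c ≠ 1 := ec_ne_one b hb hc
  have h2 : ∑ v : Fin b, ec b ((v : ℕ) * c) = ∑ i ∈ Finset.range b, ec b c ^ i := by
    rw [Finset.sum_range fun i => ec b c ^ i]
    exact Finset.sum_congr rfl fun v _ => by rw [← ec_pow]
  rw [h2, geom_sum_eq h1, ← ec_pow, ec_eq_one b hb ⟨c, by ring⟩, sub_self, zero_div]

lemma sum_ec_ite (b : ℕ) (hb : 0 < b) (d a : ℤ) (hd : 0 ≤ d) (hd' : d < b)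
    (ha : 0 ≤ a) (ha' : a < b) :
    ∑ v : Fin b, ec b ((v : ℕ) * (d - a)) = if d = a then (b : ℂ) else 0 := by
  by_cases h : d = a
  · subst h
    simp [ec_zero, Finset.card_univ]
  · rw [if_neg h]
    apply sum_ec b hb
    intro hdvd
    have : d - a = 0 := Int.eq_zero_of_abs_lt_dvd hdvd (by rw [abs_lt]; omega)
    omega


open Finset

/-! ### Digits of naturals -/

lemma digit_lt (b k j : ℕ) (hb : 0 < b) : k / b ^ j % b < b := Nat.mod_lt _ hb

lemma digit_eq_zero {b k j : ℕ} (h : k < b ^ j) : k / b ^ j % b = 0 := by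
  rw [Nat.div_eq_of_lt h, Nat.zero_mod]

lemma digit_eq_zero_of_le {b k j : ℕ} (hb : 2 ≤ b) (h : k ≤ j) : k / b ^ j % b = 0 :=
  digit_eq_zero (lt_of_le_of_lt h (lt_of_lt_of_le (Nat.lt_pow_self (n := j) hb) le_rfl))

lemma digit_pos_lt {b k j N : ℕ} (hb : 2 ≤ b) (hk : k < b ^ N)
    (hd : k / b ^ j % b ≠ 0) : j < N ∧ j < k := by
  have h1 : ¬ k < b ^ j := fun h => hd (digit_eq_zero h)
  push_neg at h1
  have h2 : j < N := by
    by_contra hc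
    push_neg at hc
    exact absurd (lt_of_le_of_lt h1 (lt_of_lt_of_le hk (Nat.pow_le_pow_right (by omega) hc)))
      (lt_irrefl _)
  exact ⟨h2, lt_of_lt_of_le (Nat.lt_pow_self (n := j) hb) h1⟩

lemma sum_digit_mod (b : ℕ) (hb : 2 ≤ b) (k n : ℕ) :
    ∑ i ∈ range n, k / b ^ i % b * b ^ i = k % b ^ n := by
  induction n with
  | zero => simp [Nat.mod_one]
  | succ n ih =>
      rw [Finset.sum_range_succ, ih, pow_succ, Nat.mod_mul]
      ring

lemma sum_digit_self {b k n : ℕ} (hb : 2 ≤ b) (h : k < b ^ n) :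
    ∑ i ∈ range n, k / b ^ i % b * b ^ i = k := by
  rw [sum_digit_mod b hb, Nat.mod_eq_of_lt h]

lemma exists_digit_ne {b k n : ℕ} (hb : 2 ≤ b) (hk : k ≠ 0) (h : k < b ^ n) :
    ∃ i, i < n ∧ k / b ^ i % b ≠ 0 := by
  by_contra hc
  push_neg at hc
  apply hk
  rw [← sum_digit_self hb h]
  exact Finset.sum_eq_zero fun i hi => by rw [hc i (mem_range.mp hi), zero_mul]

lemma sum_lt_pow {b : ℕ} (hb : 2 ≤ b) (v : ℕ → ℕ) (hv : ∀ i, v i < b) (n : ℕ) :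
    ∑ i ∈ range n, v i * b ^ i < b ^ n := by
  induction n with
  | zero => simp
  | succ n ih =>
      rw [Finset.sum_range_succ]
      have h1 : v n * b ^ n ≤ (b - 1) * b ^ n :=
        Nat.mul_le_mul_right _ (by have := hv n; omega)
      have h2 : b ^ n + (b - 1) * b ^ n = b ^ (n + 1) := by
        have h3 : 1 + (b - 1) = b := by omega
        calc b ^ n + (b - 1) * b ^ n = (1 + (b - 1)) * b ^ n := by ring
          _ = b * b ^ n := by rw [h3]
          _ = b ^ (n + 1) := by rw [pow_succ]; ring
      omega

lemma digit_sum {b : ℕ} (hb : 2 ≤ b) (v : ℕ → ℕ) (hv : ∀ i, v i < b) (n j : ℕ)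
    (hj : j < n) :
    (∑ i ∈ range n, v i * b ^ i) / b ^ j % b = v j := by
  have hsplit : ∑ i ∈ range n, v i * b ^ i
      = (∑ i ∈ range j, v i * b ^ i) + v j * b ^ j + ∑ i ∈ Ico (j + 1) n, v i * b ^ i := by
    rw [← Finset.sum_range_succ, Finset.range_eq_Ico, Finset.range_eq_Ico]
    exact (Finset.sum_Ico_consecutive (fun i => v i * b ^ i) (Nat.zero_le _) hj).symm
  have hC : ∑ i ∈ Ico (j + 1) n, v i * b ^ i
      = b ^ (j + 1) * ∑ i ∈ Ico (j + 1) n, v i * b ^ (i - (j + 1)) := by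
    rw [Finset.mul_sum]
    refine Finset.sum_congr rfl fun i hi => ?_
    obtain ⟨h1, _⟩ := Finset.mem_Ico.mp hi
    rw [show b ^ (j+1) * (v i * b ^ (i - (j+1))) = v i * (b ^ (j+1) * b ^ (i - (j+1))) by ring,
      ← pow_add, Nat.add_sub_cancel' h1]
  set A := ∑ i ∈ range j, v i * b ^ i with hA
  set C := ∑ i ∈ Ico (j + 1) n, v i * b ^ (i - (j + 1)) with hCC
  have hAlt : A < b ^ j := sum_lt_pow hb v hv j
  have hre : ∑ i ∈ range n, v i * b ^ i = A + b ^ j * (v j + b * C) := by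
    rw [hsplit, hC, pow_succ]
    ring
  rw [hre, Nat.add_mul_div_left _ _ (Nat.pow_pos (n := j) (by omega)),
    Nat.div_eq_of_lt hAlt, zero_add, Nat.add_mul_mod_self_left, Nat.mod_eq_of_lt (hv j)]


open Finset

lemma sort_erase_max (T : Finset ℕ) (hT : T.Nonempty) :
    T.sort (· ≤ ·) = (T.erase (T.max' hT)).sort (· ≤ ·) ++ [T.max' hT] := by
  set M := T.max' hT with hM
  have hMT : M ∈ T := T.max'_mem hT
  have hperm : (T.sort (· ≤ ·)).Perm ((T.erase M).sort (· ≤ ·) ++ [M]) := by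
    refine ((Finset.sort_perm_toList T _).trans ?_).trans
      (List.perm_append_singleton M _).symm
    have hMl : M ∈ T.toList := Finset.mem_toList.mpr hMT
    refine (List.perm_cons_erase hMl).trans (List.Perm.cons M ?_)
    refine List.Perm.trans ?_ (Finset.sort_perm_toList (T.erase M) _).symm
    apply List.perm_of_nodup_nodup_toFinset_eq
    · exact (Finset.nodup_toList T).erase M
    · exact Finset.nodup_toList _
    · ext x
      simp [List.mem_toFinset, (Finset.nodup_toList T).mem_erase_iff,
        Finset.mem_toList, Finset.mem_erase]

  refine List.Perm.eq_of_pairwise' (Finset.pairwise_sort _ _) ?_ hperm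
  rw [List.pairwise_append]
  refine ⟨Finset.pairwise_sort _ _, List.pairwise_singleton _ _, fun x hx y hy => ?_⟩
  rw [List.mem_singleton] at hy
  subst hy
  exact T.le_max' x (Finset.mem_of_mem_erase ((Finset.mem_sort _).mp hx))

lemma topSum_max_decomp (α : ℕ) (hα : 1 ≤ α) (T : Finset ℕ) (hT : T.Nonempty) :
    topSum α T = T.max' hT + topSum (α - 1) (T.erase (T.max' hT)) := by
  obtain ⟨α', rfl⟩ : ∃ α', α = α' + 1 := ⟨α - 1, by omega⟩
  rw [topSum, sort_erase_max T hT, List.reverse_append]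
  simp only [List.reverse_singleton, List.singleton_append, List.take_succ_cons,
    List.sum_cons, Nat.add_sub_cancel]
  rfl

lemma topSum_le_add_max {M α : ℕ} (hα : 1 ≤ α) (T : Finset ℕ) (hM : ∀ x ∈ T, x ≤ M) :
    topSum α T ≤ M + topSum (α - 1) T := by
  obtain ⟨α', rfl⟩ : ∃ α', α = α' + 1 := ⟨α - 1, by omega⟩
  rw [topSum, topSum, Nat.add_sub_cancel]
  set l := (T.sort (· ≤ ·)).reverse with hl
  have hlM : ∀ x ∈ l, x ≤ M := fun x hx =>
    hM x ((Finset.mem_sort _).mp (List.mem_reverse.mp hx))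
  by_cases h : α' < l.length
  · rw [List.sum_take_succ l α' h]
    have := hlM _ (List.getElem_mem h)
    omega
  · push_neg at h
    rw [List.take_of_length_le h, List.take_of_length_le (by omega)]
    omega

lemma sum_le_topSum : ∀ (T S : Finset ℕ) (α : ℕ), S ⊆ T → S.card ≤ α →
    (∑ x ∈ S, x) ≤ topSum α T := by
  intro T
  induction T using Finset.strongInduction with
  | _ T ih =>
    intro S α hS hcard
    rcases S.eq_empty_or_nonempty with rfl | hSne
    · simp
    have hT : T.Nonempty := hSne.mono hS
    set M := T.max' hT with hM
    have hα : 1 ≤ α := le_trans (Finset.card_pos.mpr hSne) hcard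
    have hMT : M ∈ T := T.max'_mem hT
    have hdec := topSum_max_decomp α hα T hT
    rw [← hM] at hdec
    have herase : T.erase M ⊂ T := Finset.erase_ssubset hMT
    by_cases hMS : M ∈ S
    · have h1 : S.erase M ⊆ T.erase M := Finset.erase_subset_erase _ hS
      have h2 : (S.erase M).card ≤ α - 1 := by
        rw [Finset.card_erase_of_mem hMS]; omega
      have h3 := ih _ herase (S.erase M) (α - 1) h1 h2
      have h4 : ∑ x ∈ S, x = M + ∑ x ∈ S.erase M, x :=
        (Finset.add_sum_erase _ _ hMS).symm
      omega
    · have h1 : S ⊆ T.erase M := Finset.subset_erase.mpr ⟨hS, hMS⟩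
      have h3 := ih _ herase S α h1 hcard
      have h5 : topSum α (T.erase M) ≤ M + topSum (α - 1) (T.erase M) :=
        topSum_le_add_max hα _ (fun x hx => T.le_max' x (Finset.mem_of_mem_erase hx))
      omega

lemma topSum_subset_sum (α : ℕ) (T : Finset ℕ) :
    ∃ S : Finset ℕ, S ⊆ T ∧ S.card ≤ α ∧ topSum α T = ∑ x ∈ S, x := by
  set l := ((T.sort (· ≤ ·)).reverse.take α) with hl
  have hnd : l.Nodup :=
    ((List.nodup_reverse.mpr (T.sort_nodup (· ≤ ·)))).sublist (List.take_sublist _ _)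
  refine ⟨l.toFinset, ?_, ?_, ?_⟩
  · intro x hx
    rw [List.mem_toFinset] at hx
    exact (Finset.mem_sort _).mp (List.mem_reverse.mp (List.mem_of_mem_take hx))
  · rw [List.toFinset_card_of_nodup hnd]
    exact le_trans (List.length_take_le _ _) le_rfl
  · rw [topSum, ← hl, List.sum_toFinset (fun x => x) hnd]
    simp

lemma topSum_mono {α : ℕ} {T T' : Finset ℕ} (h : T ⊆ T') : topSum α T ≤ topSum α T' := by
  obtain ⟨S, hS, hc, he⟩ := topSum_subset_sum α T
  rw [he]
  exact sum_le_topSum T' S α (hS.trans h) hc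

lemma le_topSum {α x : ℕ} {T : Finset ℕ} (hα : 1 ≤ α) (hx : x ∈ T) : x ≤ topSum α T := by
  have := sum_le_topSum T {x} α (by simpa using hx) (by simp; omega)
  simpa using this


/-! ### rdigit bounds and Walsh rewriting -/

lemma rdigit_nonneg {b : ℕ} (hb : 0 < b) (x : ℝ) (i : ℕ) : 0 ≤ rdigit b x i :=
  Int.emod_nonneg _ (by exact_mod_cast hb.ne')

lemma rdigit_lt {b : ℕ} (hb : 0 < b) (x : ℝ) (i : ℕ) : rdigit b x i < b :=
  Int.emod_lt_of_pos _ (by exact_mod_cast hb)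

lemma wal_eq {b : ℕ} (hb : 2 ≤ b) {k N : ℕ} (h : k < b ^ N) (x : ℝ) :
    wal b k x = ec b (∑ j ∈ range N, rdigit b x (j + 1) * ((k / b ^ j % b : ℕ) : ℤ)) := by
  rw [wal, ec]
  congr 2
  have e1 : ∑ j ∈ range k, rdigit b x (j + 1) * ((k / b ^ j % b : ℕ) : ℤ)
      = ∑ j ∈ range (max k N), rdigit b x (j + 1) * ((k / b ^ j % b : ℕ) : ℤ) := by
    refine Finset.sum_subset (Finset.range_subset_range.mpr (le_max_left _ _)) fun j _ hj => ?_
    rw [mem_range] at hj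
    push_neg at hj
    rw [digit_eq_zero_of_le hb hj]
    simp
  have e2 : ∑ j ∈ range N, rdigit b x (j + 1) * ((k / b ^ j % b : ℕ) : ℤ)
      = ∑ j ∈ range (max k N), rdigit b x (j + 1) * ((k / b ^ j % b : ℕ) : ℤ) := by
    refine Finset.sum_subset (Finset.range_subset_range.mpr (le_max_right _ _)) fun j _ hj => ?_
    rw [mem_range] at hj
    push_neg at hj
    rw [digit_eq_zero (lt_of_lt_of_le h (Nat.pow_le_pow_right (by omega) hj))]
    simp
  rw [e1, ← e2]

lemma walVec_eq {b n s : ℕ} (hb : 2 ≤ b) (k : Fin s → ℕ) (hk : ∀ j, k j < b ^ n)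
    (x : Fin s → ℝ) :
    walVec b k x
      = ec b (∑ j, ∑ i ∈ range n, rdigit b (x j) (i + 1) * ((k j / b ^ i % b : ℕ) : ℤ)) := by
  rw [walVec, ec_sum]
  exact Finset.prod_congr rfl fun j _ => wal_eq hb (hk j) _

lemma filter_digit_eq {b : ℕ} (hb : 2 ≤ b) {k N : ℕ} (h : k < b ^ N) :
    (range k).filter (fun j => k / b ^ j % b ≠ 0)
      = (range N).filter (fun j => k / b ^ j % b ≠ 0) := by
  ext j
  simp only [mem_filter, mem_range]
  constructor
  · rintro ⟨_, hd⟩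
    exact ⟨(digit_pos_lt hb h hd).1, hd⟩
  · rintro ⟨_, hd⟩
    exact ⟨(digit_pos_lt hb h hd).2, hd⟩

lemma muNat_eq {α b k N : ℕ} (hb : 2 ≤ b) (h : k < b ^ N) :
    muNat α b k
      = topSum α (((range N).filter (fun j => k / b ^ j % b ≠ 0)).image (fun j => j + 1)) := by
  rw [muNat, filter_digit_eq hb h]

end NetAux

open NetAux Finset in
/-- `P` is a `(t,α,β,n,m,s)`-net in base `b` if and only if
`ρ_α(D_{⌊βn⌋-t}(P)) ≥ ⌊βn⌋ - t + 1`: every nonzero `k ∈ {0,…,b^r-1}^s` (with `r = ⌊βn⌋ - t`)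
whose Walsh coefficient sum over `P` does not vanish has weight `μ_α(k) ≥ r + 1`. -/

theorem net_iff_dual_weight (b t α : ℕ) (β : ℝ) (n m s : ℕ) (hb : 2 ≤ b) (hn : 1 ≤ n)
    (hm : 1 ≤ m) (hs : 1 ≤ s) (hα : 1 ≤ α) (hβ0 : 0 < β)
    (hβ1 : β ≤ min 1 (α * m / n)) (ht : (t : ℝ) ≤ β * n)
    (P : Fin (b ^ m) → Fin s → ℝ) (hP : ∀ h j, P h j ∈ Set.Ico (0 : ℝ) 1) :
    IsNet b t α β n m s P ↔
      ∀ k : Fin s → ℕ, (∀ j, k j < b ^ ((⌊β * (n : ℝ)⌋.toNat - t))) → k ≠ 0 →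
        (∑ h, walVec b k (P h)) ≠ 0 →
        (⌊β * (n : ℝ)⌋.toNat - t) + 1 ≤ muNatVec α b k := by
  classical
  haveI : NeZero b := ⟨by omega⟩
  have hbpos : 0 < b := by omega
  set r : ℕ := ⌊β * (n : ℝ)⌋.toNat - t with hr
  have htf : (t : ℤ) ≤ ⌊β * (n : ℝ)⌋ := Int.le_floor.mpr (by exact_mod_cast ht)
  have hfl0 : 0 ≤ ⌊β * (n : ℝ)⌋ := by
    have h0 : (0 : ℤ) ≤ (t : ℤ) := Int.ofNat_nonneg t
    omega
  have hβ1' : β ≤ 1 := le_trans hβ1 (by exact_mod_cast min_le_left 1 (α * m / n))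
  have hβn : β * (n : ℝ) ≤ (n : ℝ) := by
    have h1 : β * (n : ℝ) ≤ 1 * (n : ℝ) :=
      mul_le_mul_of_nonneg_right hβ1' (Nat.cast_nonneg n)
    linarith
  have hfln : ⌊β * (n : ℝ)⌋ ≤ (n : ℤ) := by
    have h2 := Int.floor_le_floor hβn
    rwa [Int.floor_natCast] at h2
  have hrn : r ≤ n := by omega
  have hwiff : ∀ w : ℕ, ((w : ℝ) ≤ β * ↑n - ↑t ↔ w ≤ r) := by
    intro w
    rw [le_sub_iff_add_le,
      show (w : ℝ) + (t : ℝ) = (((w + t : ℕ) : ℤ) : ℝ) by push_cast; ring,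
      ← Int.le_floor]
    omega
  constructor
  · -- Net implies dual weight bound
    intro hNet k hk hk0 hsum
    by_contra hcon
    push_neg at hcon
    have hμ_le : muNatVec α b k ≤ r := by omega
    apply hsum
    have hkbn : ∀ j, k j < b ^ n :=
      fun j => lt_of_lt_of_le (hk j) (Nat.pow_le_pow_right (by omega) hrn)
    set I : Fin s → Finset (Fin n) :=
      fun j => Finset.univ.filter (fun i : Fin n => k j / b ^ (i : ℕ) % b ≠ 0) with hI
    have himg : ∀ j, (I j).image (fun i : Fin n => (i : ℕ) + 1)
        = ((range (k j)).filter (fun j' => k j / b ^ j' % b ≠ 0)).image (fun j' => j' + 1) := by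
      intro j
      rw [filter_digit_eq hb (hkbn j)]
      ext c
      simp only [Finset.mem_image, Finset.mem_filter, Finset.mem_univ, true_and, mem_range, hI]
      constructor
      · rintro ⟨i, hd, rfl⟩
        exact ⟨(i : ℕ), ⟨i.isLt, hd⟩, rfl⟩
      · rintro ⟨i', ⟨hi'n, hd⟩, rfl⟩
        exact ⟨⟨i', hi'n⟩, hd, rfl⟩
    have hμeq : ∑ j, topSum α ((I j).image (fun i : Fin n => (i : ℕ) + 1)) = muNatVec α b k := by
      rw [muNatVec]
      exact Finset.sum_congr rfl fun j _ => by rw [himg j, muNat]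
    have hcount := hNet I ((hwiff _).mpr (by rw [hμeq]; exact hμ_le))
    set g : Fin (b ^ m) → (Fin s → Fin n → Fin b) := fun h j i =>
      if i ∈ I j then ⟨(rdigit b (P h j) ((i : ℕ) + 1)).toNat, by
        have h1 := rdigit_nonneg hbpos (P h j) ((i : ℕ) + 1)
        have h2 := rdigit_lt hbpos (P h j) ((i : ℕ) + 1)
        omega⟩ else 0 with hg
    set V := Fintype.piFinset (fun j : Fin s => Fintype.piFinset (fun i : Fin n =>
      if i ∈ I j then (Finset.univ : Finset (Fin b)) else {0})) with hV
    set χ : (Fin s → Fin n → Fin b) → ℂ :=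
      fun c => ec b (∑ j, ∑ i : Fin n,
        ((c j i : ℕ) : ℤ) * ((k j / b ^ (i : ℕ) % b : ℕ) : ℤ)) with hχ
    have hwal : ∀ h, walVec b k (P h) = χ (g h) := by
      intro h
      rw [walVec_eq hb k hkbn, hχ]
      congr 1
      refine Finset.sum_congr rfl fun j _ => ?_
      rw [← Fin.sum_univ_eq_sum_range
        (fun i => rdigit b (P h j) (i + 1) * ((k j / b ^ i % b : ℕ) : ℤ))]
      refine Finset.sum_congr rfl fun i _ => ?_
      by_cases hd : k j / b ^ (i : ℕ) % b ≠ 0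
      · have hiI : i ∈ I j := by
          rw [hI]
          simp only [Finset.mem_filter, Finset.mem_univ, true_and]
          exact hd
        have hnn := rdigit_nonneg hbpos (P h j) ((i : ℕ) + 1)
        simp only [hg, if_pos hiI, Fin.val_mk, Int.toNat_of_nonneg hnn]
      · push_neg at hd
        rw [hd]
        simp
    have hgV : ∀ h, g h ∈ V := by
      intro h
      rw [hV, Fintype.mem_piFinset]
      intro j
      rw [Fintype.mem_piFinset]
      intro i
      by_cases hij : i ∈ I j
      · rw [if_pos hij]; exact Finset.mem_univ _
      · rw [if_neg hij]
        simp only [hg, if_neg hij]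
        exact Finset.mem_singleton_self _
    have hsplit : ∑ h, walVec b k (P h)
        = ∑ c ∈ V, ∑ h ∈ Finset.univ.filter (fun h => g h = c), walVec b k (P h) :=
      (Finset.sum_fiberwise_of_maps_to (fun h _ => hgV h) _).symm
    have hfe : ∀ c ∈ V, Finset.univ.filter (fun h => g h = c)
        = Finset.univ.filter (fun h : Fin (b ^ m) =>
            ∀ j : Fin s, ∀ i ∈ I j, rdigit b (P h j) ((i : ℕ) + 1) = ((c j i : ℕ) : ℤ)) := by
      intro c hc
      ext h
      simp only [Finset.mem_filter, Finset.mem_univ, true_and]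
      constructor
      · rintro rfl j i hi
        simp only [hg, if_pos hi]
        exact (Int.toNat_of_nonneg (rdigit_nonneg hbpos _ _)).symm
      · intro hcond
        funext j i
        by_cases hij : i ∈ I j
        · have h1 := hcond j i hij
          simp only [hg, if_pos hij]
          apply Fin.ext
          show (rdigit b (P h j) ((i : ℕ) + 1)).toNat = (c j i : ℕ)
          rw [h1]
          exact Int.toNat_natCast _
        · simp only [hg, if_neg hij]
          have h2 := Fintype.mem_piFinset.mp (Fintype.mem_piFinset.mp hc j) i
          rw [if_neg hij] at h2
          exact (Finset.mem_singleton.mp h2).symm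
    have hinner : ∀ c ∈ V, ∑ h ∈ Finset.univ.filter (fun h => g h = c), walVec b k (P h)
        = ((Finset.univ.filter (fun h => g h = c)).card : ℂ) * χ c := by
      intro c hc
      rw [Finset.sum_congr rfl (fun h hh => by
        rw [hwal h, (Finset.mem_filter.mp hh).2]), Finset.sum_const, nsmul_eq_mul]
    have hchi0 : ∑ c ∈ V, χ c = 0 := by
      have hrw : ∀ c : Fin s → Fin n → Fin b, χ c
          = ∏ j, ec b (∑ i : Fin n, ((c j i : ℕ) : ℤ) * ((k j / b ^ (i : ℕ) % b : ℕ) : ℤ)) :=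
        fun c => by rw [hχ]; exact ec_sum b Finset.univ _
      rw [Finset.sum_congr rfl fun c _ => hrw c, hV,
        ← Finset.prod_univ_sum
          (fun j : Fin s => Fintype.piFinset fun i : Fin n =>
            if i ∈ I j then (Finset.univ : Finset (Fin b)) else {0})
          (fun j f => ec b (∑ i : Fin n,
            ((f i : ℕ) : ℤ) * ((k j / b ^ (i : ℕ) % b : ℕ) : ℤ)))]
      obtain ⟨j0, hj0⟩ : ∃ j0, k j0 ≠ 0 := by
        by_contra hcc
        push_neg at hcc
        exact hk0 (funext hcc)
      refine Finset.prod_eq_zero (Finset.mem_univ j0) ?_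
      rw [Finset.sum_congr rfl fun f _ => ec_sum b Finset.univ
        (fun i : Fin n => ((f i : ℕ) : ℤ) * ((k j0 / b ^ (i : ℕ) % b : ℕ) : ℤ)),
        ← Finset.prod_univ_sum
          (fun i : Fin n => if i ∈ I j0 then (Finset.univ : Finset (Fin b)) else {0})
          (fun i (x : Fin b) => ec b (((x : ℕ) : ℤ) * ((k j0 / b ^ (i : ℕ) % b : ℕ) : ℤ)))]
      obtain ⟨i0, hi0n, hi0⟩ := exists_digit_ne hb hj0 (hkbn j0)
      refine Finset.prod_eq_zero (Finset.mem_univ (⟨i0, hi0n⟩ : Fin n)) ?_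
      have hmem : (⟨i0, hi0n⟩ : Fin n) ∈ I j0 := by
        rw [hI]
        simp only [Finset.mem_filter, Finset.mem_univ, true_and]
        exact hi0
      rw [if_pos hmem]
      apply sum_ec b hbpos
      intro hdvd
      exact hi0 (Nat.eq_zero_of_dvd_of_lt (Int.ofNat_dvd.mp hdvd)
        (digit_lt b (k j0) i0 hbpos))
    have key : ((b : ℂ) ^ (∑ j, (I j).card)) * ∑ h, walVec b k (P h) = 0 := by
      rw [hsplit, Finset.mul_sum]
      have hterm : ∀ c ∈ V, (b : ℂ) ^ (∑ j, (I j).card)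
          * ∑ h ∈ Finset.univ.filter (fun h => g h = c), walVec b k (P h)
          = (b : ℂ) ^ m * χ c := by
        intro c hc
        rw [hinner c hc, hfe c hc]
        have h2 : (((Finset.univ.filter (fun h : Fin (b ^ m) =>
            ∀ j : Fin s, ∀ i ∈ I j, rdigit b (P h j) ((i : ℕ) + 1) = ((c j i : ℕ) : ℤ))).card : ℂ))
            * (b : ℂ) ^ (∑ j, (I j).card) = (b : ℂ) ^ m := by
          exact_mod_cast congrArg (fun x : ℕ => (x : ℂ)) (hcount c)
        calc (b : ℂ) ^ (∑ j, (I j).card) * (((Finset.univ.filter (fun h : Fin (b ^ m) =>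
            ∀ j : Fin s, ∀ i ∈ I j, rdigit b (P h j) ((i : ℕ) + 1) = ((c j i : ℕ) : ℤ))).card : ℂ) * χ c)
            = (((Finset.univ.filter (fun h : Fin (b ^ m) =>
              ∀ j : Fin s, ∀ i ∈ I j, rdigit b (P h j) ((i : ℕ) + 1) = ((c j i : ℕ) : ℤ))).card : ℂ)
              * (b : ℂ) ^ (∑ j, (I j).card)) * χ c := by ring
          _ = (b : ℂ) ^ m * χ c := by rw [h2]
      rw [Finset.sum_congr rfl hterm, ← Finset.mul_sum, hchi0, mul_zero]
    have hbne : ((b : ℂ) ^ (∑ j, (I j).card)) ≠ 0 :=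
      pow_ne_zero _ (Nat.cast_ne_zero.mpr (by omega))
    exact (mul_eq_zero.mp key).resolve_left hbne
  · -- Dual weight bound implies net
    intro hDual I hw a
    have hwr : (∑ j, topSum α ((I j).image (fun i : Fin n => (i : ℕ) + 1))) ≤ r :=
      (hwiff _).mp hw
    have hposI : ∀ j : Fin s, ∀ i ∈ I j, (i : ℕ) + 1 ≤ r := by
      intro j i hi
      have h1 : (i : ℕ) + 1 ≤ topSum α ((I j).image (fun i : Fin n => (i : ℕ) + 1)) :=
        le_topSum hα (Finset.mem_image_of_mem _ hi)
      have h2 : topSum α ((I j).image (fun i : Fin n => (i : ℕ) + 1))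
          ≤ ∑ j', topSum α ((I j').image (fun i : Fin n => (i : ℕ) + 1)) :=
        Finset.single_le_sum (f := fun j' => topSum α ((I j').image (fun i : Fin n => (i : ℕ) + 1)))
          (fun _ _ => Nat.zero_le _) (Finset.mem_univ j)
      omega
    set V := Fintype.piFinset (fun j : Fin s => Fintype.piFinset (fun i : Fin n =>
      if i ∈ I j then (Finset.univ : Finset (Fin b)) else {0})) with hV
    set w : (Fin s → Fin n → Fin b) → Fin s → ℕ → ℕ :=
      fun v j i' => if hi' : i' < n then (v j ⟨i', hi'⟩ : ℕ) else 0 with hwdef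
    set K : (Fin s → Fin n → Fin b) → Fin s → ℕ :=
      fun v j => ∑ i ∈ range n, w v j i * b ^ i with hK
    have hwlt : ∀ v j i', w v j i' < b := by
      intro v j i'
      simp only [hwdef]
      by_cases hi' : i' < n
      · rw [dif_pos hi']; exact (v j ⟨i', hi'⟩).isLt
      · rw [dif_neg hi']; omega
    have hwv : ∀ v j (i : Fin n), w v j (i : ℕ) = (v j i : ℕ) := by
      intro v j i
      simp only [hwdef, i.isLt, dif_pos, Fin.eta]
    have hsupp : ∀ v ∈ V, ∀ j i', w v j i' ≠ 0 → ∃ hi' : i' < n, (⟨i', hi'⟩ : Fin n) ∈ I j := by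
      intro v hv j i' hne
      simp only [hwdef] at hne
      by_cases hi' : i' < n
      · refine ⟨hi', ?_⟩
        rw [dif_pos hi'] at hne
        by_contra hno
        have h2 := Fintype.mem_piFinset.mp (Fintype.mem_piFinset.mp hv j) ⟨i', hi'⟩
        rw [if_neg hno] at h2
        rw [Finset.mem_singleton.mp h2] at hne
        simp at hne
      · rw [dif_neg hi'] at hne; omega
    have hKdig : ∀ v j (i : Fin n), K v j / b ^ (i : ℕ) % b = (v j i : ℕ) := by
      intro v j i
      simp only [hK]
      rw [digit_sum hb (w v j) (hwlt v j) n (i : ℕ) i.isLt]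
      exact hwv v j i
    have hKbn : ∀ v j, K v j < b ^ n := by
      intro v j
      simp only [hK]
      exact sum_lt_pow hb (w v j) (hwlt v j) n
    have hKbr : ∀ v ∈ V, ∀ j, K v j < b ^ r := by
      intro v hv j
      simp only [hK]
      have hsub : ∑ i ∈ range n, w v j i * b ^ i = ∑ i ∈ range r, w v j i * b ^ i := by
        refine (Finset.sum_subset (Finset.range_subset_range.mpr hrn) fun i _ hi => ?_).symm
        rw [mem_range] at hi
        push_neg at hi
        by_contra hne
        have hne' : w v j i ≠ 0 := fun h0 => hne (by rw [h0, zero_mul])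
        obtain ⟨hi', hmem⟩ := hsupp v hv j i hne'
        have := hposI j ⟨i, hi'⟩ hmem
        simp only [] at this
        omega
      rw [hsub]
      exact sum_lt_pow hb (w v j) (hwlt v j) r
    have hKne : ∀ v ∈ V, v ≠ 0 → K v ≠ 0 := by
      intro v _ hv0 hK0
      apply hv0
      funext j i
      have h1 : K v j = 0 := congrFun hK0 j
      simp only [hK] at h1
      have h2 : w v j (i : ℕ) * b ^ (i : ℕ) = 0 :=
        Finset.sum_eq_zero_iff.mp h1 _ (mem_range.mpr i.isLt)
      have h3 : w v j (i : ℕ) = 0 := by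
        have hbp : 0 < b ^ (i : ℕ) := Nat.pow_pos hbpos
        exact Nat.mul_eq_zero.mp h2 |>.resolve_right (by omega)
      rw [hwv v j i] at h3
      exact Fin.ext h3
    have hmuK : ∀ v ∈ V, muNatVec α b (K v) ≤ r := by
      intro v hv
      have h1 : ∀ j, muNat α b (K v j) ≤ topSum α ((I j).image (fun i : Fin n => (i : ℕ) + 1)) := by
        intro j
        rw [muNat_eq hb (hKbn v j)]
        apply topSum_mono
        intro x hx
        obtain ⟨i', hi'mem, rfl⟩ := Finset.mem_image.mp hx
        obtain ⟨hi'n, hdne⟩ := Finset.mem_filter.mp hi'mem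
        simp only [hK] at hdne
        rw [digit_sum hb (w v j) (hwlt v j) n i' (mem_range.mp hi'n)] at hdne
        obtain ⟨hi'lt, hmem⟩ := hsupp v hv j i' hdne
        exact Finset.mem_image.mpr ⟨⟨i', hi'lt⟩, hmem, rfl⟩
      calc muNatVec α b (K v) = ∑ j, muNat α b (K v j) := by rw [muNatVec]
        _ ≤ ∑ j, topSum α ((I j).image (fun i : Fin n => (i : ℕ) + 1)) :=
            Finset.sum_le_sum fun j _ => h1 j
        _ ≤ r := hwr
    set A : (Fin s → Fin n → Fin b) → ℤ :=
      fun v => ∑ j, ∑ i : Fin n, ((a j i : ℕ) : ℤ) * ((v j i : ℕ) : ℤ) with hA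
    have h0V : (0 : Fin s → Fin n → Fin b) ∈ V := by
      rw [hV, Fintype.mem_piFinset]
      intro j
      rw [Fintype.mem_piFinset]
      intro i
      by_cases hij : i ∈ I j
      · rw [if_pos hij]; exact Finset.mem_univ _
      · rw [if_neg hij]; exact Finset.mem_singleton_self _
    -- evaluation of the character-weighted sum, first way
    have hway1 : ∑ v ∈ V, ec b (-(A v)) * (∑ h, walVec b (K v) (P h)) = (b : ℂ) ^ m := by
      rw [Finset.sum_eq_single_of_mem 0 h0V ?_]
      · have hK0 : K 0 = fun _ => 0 := by
          funext j
          simp only [hK, hwdef]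
          refine Finset.sum_eq_zero fun i hi => ?_
          rw [dif_pos (mem_range.mp hi)]
          simp
        have hA0 : A 0 = 0 := by
          simp only [hA]
          refine Finset.sum_eq_zero fun j _ => Finset.sum_eq_zero fun i _ => ?_
          simp
        rw [hK0, hA0, neg_zero, ec_zero, one_mul]
        have hwal1 : ∀ h, walVec b (fun _ => 0) (P h) = 1 := by
          intro h
          rw [walVec]
          refine Finset.prod_eq_one fun j _ => ?_
          rw [wal]
          simp
        rw [Finset.sum_congr rfl fun h _ => hwal1 h, Finset.sum_const, Finset.card_univ,
          Fintype.card_fin, nsmul_eq_mul, mul_one]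
        push_cast
        ring
      · intro v hvV hv0
        have hzero : (∑ h, walVec b (K v) (P h)) = 0 := by
          by_contra hne
          have h1 := hDual (K v) (hKbr v hvV) (hKne v hvV hv0) hne
          have h2 := hmuK v hvV
          omega
        rw [hzero, mul_zero]
    -- second way
    have hway2 : ∑ v ∈ V, ec b (-(A v)) * (∑ h, walVec b (K v) (P h))
        = ((Finset.univ.filter (fun h : Fin (b ^ m) =>
            ∀ j : Fin s, ∀ i ∈ I j, rdigit b (P h j) ((i : ℕ) + 1) = ((a j i : ℕ) : ℤ))).card : ℂ)
          * (b : ℂ) ^ (∑ j, (I j).card) := by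
      have hin : ∀ h : Fin (b ^ m), ∑ v ∈ V, ec b (-(A v)) * walVec b (K v) (P h)
          = if (∀ j : Fin s, ∀ i ∈ I j, rdigit b (P h j) ((i : ℕ) + 1) = ((a j i : ℕ) : ℤ))
            then (b : ℂ) ^ (∑ j, (I j).card) else 0 := by
        intro h
        have hterm : ∀ v ∈ V, ec b (-(A v)) * walVec b (K v) (P h)
            = ∏ j, ∏ i : Fin n, ec b (((v j i : ℕ) : ℤ)
                * (rdigit b (P h j) ((i : ℕ) + 1) - ((a j i : ℕ) : ℤ))) := by
          intro v hv
          rw [walVec_eq hb (K v) (hKbn v), ← ec_add]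
          have hSj : ∀ j, ∑ i ∈ range n,
              rdigit b (P h j) (i + 1) * ((K v j / b ^ i % b : ℕ) : ℤ)
              = ∑ i : Fin n, rdigit b (P h j) ((i : ℕ) + 1) * ((v j i : ℕ) : ℤ) := by
            intro j
            rw [← Fin.sum_univ_eq_sum_range
              (fun i => rdigit b (P h j) (i + 1) * ((K v j / b ^ i % b : ℕ) : ℤ))]
            exact Finset.sum_congr rfl fun i _ => by rw [hKdig v j i]
          have harg : -(A v) + (∑ j, ∑ i ∈ range n,
              rdigit b (P h j) (i + 1) * ((K v j / b ^ i % b : ℕ) : ℤ))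
              = ∑ j, ∑ i : Fin n, ((v j i : ℕ) : ℤ)
                  * (rdigit b (P h j) ((i : ℕ) + 1) - ((a j i : ℕ) : ℤ)) := by
            simp only [hA]
            rw [Finset.sum_congr rfl fun j _ => hSj j, neg_add_eq_sub,
              ← Finset.sum_sub_distrib]
            refine Finset.sum_congr rfl fun j _ => ?_
            rw [← Finset.sum_sub_distrib]
            exact Finset.sum_congr rfl fun i _ => by ring
          rw [harg, ec_sum]
          exact Finset.prod_congr rfl fun j _ => ec_sum b Finset.univ
            (fun i : Fin n => ((v j i : ℕ) : ℤ)
              * (rdigit b (P h j) ((i : ℕ) + 1) - ((a j i : ℕ) : ℤ)))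
        rw [Finset.sum_congr rfl hterm,
          ← Finset.prod_univ_sum
            (fun j : Fin s => Fintype.piFinset fun i : Fin n =>
              if i ∈ I j then (Finset.univ : Finset (Fin b)) else {0})
            (fun j f => ∏ i : Fin n, ec b (((f i : ℕ) : ℤ)
              * (rdigit b (P h j) ((i : ℕ) + 1) - ((a j i : ℕ) : ℤ))))]
        rw [Finset.prod_congr rfl (fun j _ =>
          (Finset.prod_univ_sum
            (fun i : Fin n => if i ∈ I j then (Finset.univ : Finset (Fin b)) else {0})
            (fun i (x : Fin b) => ec b (((x : ℕ) : ℤ)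
              * (rdigit b (P h j) ((i : ℕ) + 1) - ((a j i : ℕ) : ℤ))))).symm)]
        have hfac : ∀ (j : Fin s) (i : Fin n),
            (∑ x ∈ (if i ∈ I j then (Finset.univ : Finset (Fin b)) else {0}),
              ec b (((x : ℕ) : ℤ) * (rdigit b (P h j) ((i : ℕ) + 1) - ((a j i : ℕ) : ℤ))))
            = if i ∈ I j then (if rdigit b (P h j) ((i : ℕ) + 1) = ((a j i : ℕ) : ℤ)
                then (b : ℂ) else 0) else 1 := by
          intro j i
          by_cases hij : i ∈ I j
          · rw [if_pos hij, if_pos hij]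
            exact sum_ec_ite b hbpos _ _ (rdigit_nonneg hbpos _ _) (rdigit_lt hbpos _ _)
              (Int.ofNat_nonneg _) (by exact_mod_cast (a j i).isLt)
          · rw [if_neg hij, if_neg hij, Finset.sum_singleton, Fin.val_zero]
            push_cast
            rw [zero_mul, ec_zero]
        rw [Finset.prod_congr rfl fun j _ => Finset.prod_congr rfl fun i _ => hfac j i]
        by_cases hall : ∀ j : Fin s, ∀ i ∈ I j, rdigit b (P h j) ((i : ℕ) + 1) = ((a j i : ℕ) : ℤ)
        · rw [if_pos hall]
          have hjj : ∀ j : Fin s, (∏ i : Fin n, if i ∈ I j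
              then (if rdigit b (P h j) ((i : ℕ) + 1) = ((a j i : ℕ) : ℤ) then (b : ℂ) else 0)
              else 1) = (b : ℂ) ^ (I j).card := by
            intro j
            calc (∏ i : Fin n, if i ∈ I j
                then (if rdigit b (P h j) ((i : ℕ) + 1) = ((a j i : ℕ) : ℤ) then (b : ℂ) else 0)
                else 1)
                = ∏ i : Fin n, (if i ∈ I j then (b : ℂ) else 1) :=
                  Finset.prod_congr rfl fun i _ => by
                    by_cases hij : i ∈ I j
                    · rw [if_pos hij, if_pos hij, if_pos (hall j i hij)]
                    · rw [if_neg hij, if_neg hij]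
              _ = ∏ i ∈ Finset.univ ∩ I j, (b : ℂ) := Finset.prod_ite_mem _ _ _
              _ = (b : ℂ) ^ (I j).card := by rw [Finset.univ_inter, Finset.prod_const]
          rw [Finset.prod_congr rfl fun j _ => hjj j, Finset.prod_pow_eq_pow_sum]
        · rw [if_neg hall]
          push_neg at hall
          obtain ⟨j0, i0, hi0, hne0⟩ := hall
          refine Finset.prod_eq_zero (Finset.mem_univ j0) ?_
          refine Finset.prod_eq_zero (Finset.mem_univ i0) ?_
          rw [if_pos hi0, if_neg hne0]
      calc ∑ v ∈ V, ec b (-(A v)) * ∑ h, walVec b (K v) (P h)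
          = ∑ v ∈ V, ∑ h, ec b (-(A v)) * walVec b (K v) (P h) :=
            Finset.sum_congr rfl fun v _ => Finset.mul_sum _ _ _
        _ = ∑ h : Fin (b ^ m), ∑ v ∈ V, ec b (-(A v)) * walVec b (K v) (P h) :=
            Finset.sum_comm
        _ = ∑ h : Fin (b ^ m), if (∀ j : Fin s, ∀ i ∈ I j,
              rdigit b (P h j) ((i : ℕ) + 1) = ((a j i : ℕ) : ℤ))
            then (b : ℂ) ^ (∑ j, (I j).card) else 0 :=
            Finset.sum_congr rfl fun h _ => hin h
        _ = _ := by
            rw [Finset.sum_ite, Finset.sum_const, Finset.sum_const_zero, add_zero,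
              nsmul_eq_mul]
    have hfinal := hway1.symm.trans hway2
    have hfinal2 : (((Finset.univ.filter (fun h : Fin (b ^ m) =>
        ∀ j : Fin s, ∀ i ∈ I j, rdigit b (P h j) ((i : ℕ) + 1) = ((a j i : ℕ) : ℤ))).card
          * b ^ (∑ j, (I j).card) : ℕ) : ℂ) = ((b ^ m : ℕ) : ℂ) := by
      push_cast
      exact hfinal.symm
    exact_mod_cast hfinal2
end

section
/- Let {0} = N'_0 ⊂ N'_1 ⊂ ... ⊂ N'_r = F_q^{n's'} be a chain of linear [s',n',α',k'_u,δ'_u]_q-spaces with generating vectors v_1,...,v_{n's'} such that N'_u = span(v_1,...,v_{k'_u}), and let N_u ⊆ F_{q_u}^{ns} be ((s,n),α,K_u,δ_u)_{q_u}-spaces with q_u = q^{e_u}, e_u = k'_u − k'_{u−1}. Then the concatenated space N = {∑_{u=1}^r φ_u(x_u) : x_u ∈ N_u}, where φ_u replaces each F_{q_u}-symbol by the corresponding F_q-linear combination of v_{k'_{u−1}+1},...,v_{k'_u} with the interleaved column arrangement, is an ((ss', nn'), αα', K_1···K_r, δ)_q-space with δ ≥ min over u with |N_u| > 1 of δ_u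 δ'_u; in particular N has exactly K_1···K_r elements. -/
/-- The higher order weight `μ_{α,n}` of a single block `a ∈ G^n` (a symbol is "nonzero"
if it is a nonzero element of `G`). -/
def muBlock (α : ℕ) {G : Type*} [Zero G] [DecidableEq G] {n : ℕ} (a : Fin n → G) : ℕ :=
  topSum α ((Finset.univ.filter (fun i => a i ≠ 0)).image (fun i : Fin n => (i : ℕ) + 1))

/-- The higher order weight `μ_{α,n}` on `G^{ns}`, extended additively over the `s` blocks. -/
def muWt (α : ℕ) {G : Type*} [Zero G] [DecidableEq G] {s n : ℕ} (A : Fin s → Fin n → G) : ℕ :=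
  ∑ j, muBlock α (A j)

/-- First component of the index `c = (a-1)·q + a'` (`0`-based). -/
def unpair1 {p q : ℕ} (c : Fin (p * q)) : Fin p :=
  ⟨(c : ℕ) / q, Nat.div_lt_of_lt_mul (Nat.mul_comm p q ▸ c.isLt)⟩

/-- Second component of the index `c = (a-1)·q + a'` (`0`-based). -/
def unpair2 {p q : ℕ} (c : Fin (p * q)) : Fin q :=
  ⟨(c : ℕ) % q, by
    rcases Nat.eq_zero_or_pos q with h | h
    · exact absurd c.isLt (by simp [h])
    · exact Nat.mod_lt _ h⟩

/-- The map `φ_u`: each `F_{q_u}`-symbol of an outer word (regarded as a vector of length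
`e_u` over `F`) is replaced by the corresponding linear combination of the inner generating
vectors `v_{off+1}, …, v_{off+e_u}`, with the interleaved column arrangement: column
`(a', τ')` of the inner word and column `(a, τ)` of the outer word determine column
`((a-1)s' + a', (τ-1)n' + τ')` of the result. -/
def phiMap (F : Type*) [Field F] {s n s' n' e : ℕ} (v : ℕ → Fin s' → Fin n' → F) (off : ℕ)
    (x : Fin s → Fin n → (Fin e → F)) : Fin (s * s') → Fin (n * n') → F :=
  fun c d => ∑ i : Fin e, x (unpair1 c) (unpair1 d) i * v (off + (i : ℕ)) (unpair2 c) (unpair2 d)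

/-- The concatenated space `N = {∑_{u=1}^r φ_u(x_u) : x_u ∈ N_u}`. -/
def concatSet (F : Type*) [Field F] {s n s' n' : ℕ} (r : ℕ) (k' : ℕ → ℕ)
    (v : ℕ → Fin s' → Fin n' → F)
    (Nout : (u : Fin r) → Set (Fin s → Fin n → (Fin (k' ((u : ℕ) + 1) - k' (u : ℕ)) → F))) :
    Set (Fin (s * s') → Fin (n * n') → F) :=
  {z | ∃ x : (u : Fin r) → (Fin s → Fin n → (Fin (k' ((u : ℕ) + 1) - k' (u : ℕ)) → F)),
    (∀ u, x u ∈ Nout u) ∧ z = ∑ u : Fin r, phiMap F v (k' (u : ℕ)) (x u)}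

lemma topSum_zero (T : Finset ℕ) : topSum 0 T = 0 := by simp [topSum]

lemma topSum_empty (k : ℕ) : topSum k (∅ : Finset ℕ) = 0 := by simp [topSum]

lemma sort_max' (T : Finset ℕ) (h : T.Nonempty) :
    T.sort (· ≤ ·) = (T.erase (T.max' h)).sort (· ≤ ·) ++ [T.max' h] := by
  set m := T.max' h with hm
  refine (fun hp h1 h2 => List.Perm.eq_of_pairwise' (r := (· ≤ ·)) h1 h2 hp) ?_ ?_ ?_
  · apply List.perm_of_nodup_nodup_toFinset_eq (T.sort_nodup _)
    · refine List.Nodup.append ((T.erase m).sort_nodup _) (List.nodup_singleton m) ?_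
      intro x hx hx'
      simp only [List.mem_singleton] at hx'
      subst hx'
      exact absurd (Finset.mem_sort (α := ℕ) (· ≤ ·) |>.1 hx) (Finset.notMem_erase _ _)
    · ext x
      simp only [List.mem_toFinset, Finset.mem_sort, List.mem_append, List.mem_singleton,
        Finset.mem_erase]
      constructor
      · intro hx
        by_cases hxm : x = m
        · exact Or.inr hxm
        · exact Or.inl ⟨hxm, hx⟩
      · rintro (⟨-, hx⟩ | rfl)
        · exact hx
        · exact T.max'_mem h
  · exact T.pairwise_sort _
  · rw [List.pairwise_append]
    refine ⟨(T.erase m).pairwise_sort _, List.pairwise_singleton _ m, ?_⟩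
    intro x hx y hy
    simp only [List.mem_singleton] at hy
    subst hy
    exact T.le_max' x (Finset.mem_of_mem_erase (Finset.mem_sort (α := ℕ) (· ≤ ·) |>.1 hx))

lemma topSum_succ (k : ℕ) (T : Finset ℕ) (h : T.Nonempty) :
    topSum (k + 1) T = T.max' h + topSum k (T.erase (T.max' h)) := by
  unfold topSum
  rw [sort_max' T h, List.reverse_append, List.reverse_singleton, List.singleton_append,
    List.take_succ_cons, List.sum_cons]

lemma topSum_exists_subset (k : ℕ) : ∀ T : Finset ℕ,
    ∃ S ⊆ T, S.card ≤ k ∧ ∑ x ∈ S, x = topSum k T := by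
  induction k with
  | zero => intro T; exact ⟨∅, Finset.empty_subset T, by simp, by simp [topSum_zero]⟩
  | succ k ih =>
    intro T
    rcases T.eq_empty_or_nonempty with rfl | h
    · exact ⟨∅, by simp, by simp, by simp [topSum_empty]⟩
    · obtain ⟨S, hS, hc, hsum⟩ := ih (T.erase (T.max' h))
      refine ⟨insert (T.max' h) S, ?_, ?_, ?_⟩
      · intro x hx
        rcases Finset.mem_insert.1 hx with rfl | hx
        · exact T.max'_mem h
        · exact Finset.mem_of_mem_erase (hS hx)
      · calc (insert (T.max' h) S).card ≤ S.card + 1 := Finset.card_insert_le _ _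
          _ ≤ k + 1 := by omega
      · rw [Finset.sum_insert (fun hmem => Finset.notMem_erase _ _ (hS hmem)),
          topSum_succ k T h, hsum]

lemma sum_le_topSum (k : ℕ) : ∀ (S T : Finset ℕ), S ⊆ T → S.card ≤ k →
    ∑ x ∈ S, x ≤ topSum k T := by
  induction k with
  | zero =>
    intro S T _ hc
    simp only [Nat.le_zero, Finset.card_eq_zero] at hc
    simp [hc]
  | succ k ih =>
    intro S T hST hc
    rcases S.eq_empty_or_nonempty with rfl | hS
    · simp
    have hT : T.Nonempty := hS.mono hST
    set m := T.max' hT with hm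
    set x := S.max' hS with hx
    have hxm : x ≤ m := T.le_max' x (hST (S.max'_mem hS))
    have hsub : S.erase x ⊆ T.erase m := by
      intro y hy
      have hyS := Finset.mem_of_mem_erase hy
      refine Finset.mem_erase.2 ⟨?_, hST hyS⟩
      intro hym
      have : y ≤ x := S.le_max' y hyS
      have : x = y := le_antisymm (hym ▸ hxm) (hym ▸ this)
      exact (Finset.mem_erase.1 hy).1 this.symm
    have hce : (S.erase x).card ≤ k := by
      rw [hx, Finset.card_erase_of_mem (S.max'_mem hS)]
      omega
    calc ∑ y ∈ S, y = x + ∑ y ∈ S.erase x, y :=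
          (Finset.add_sum_erase _ _ (S.max'_mem hS)).symm
      _ ≤ m + topSum k (T.erase m) := Nat.add_le_add hxm (ih _ _ hsub hce)
      _ = topSum (k + 1) T := (topSum_succ k T hT).symm

lemma topSum_mono_subset (k : ℕ) {S T : Finset ℕ} (h : S ⊆ T) : topSum k S ≤ topSum k T := by
  obtain ⟨S₀, hsub, hc, hsum⟩ := topSum_exists_subset k S
  rw [← hsum]
  exact sum_le_topSum k S₀ T (hsub.trans h) hc

lemma topSum_image_add (k : ℕ) : ∀ (T : Finset ℕ) (c : ℕ),
    topSum k (T.image (· + c)) = topSum k T + min k T.card * c := by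
  induction k with
  | zero => intro T c; simp [topSum_zero]
  | succ k ih =>
    intro T c
    rcases T.eq_empty_or_nonempty with rfl | h
    · simp [topSum_empty]
    have himg : (T.image (· + c)).Nonempty := h.image _
    have hinj : Function.Injective (· + c) := fun a b hab => by simpa using hab
    have hmax : (T.image (· + c)).max' himg = T.max' h + c := by
      apply le_antisymm
      · apply Finset.max'_le
        intro y hy
        obtain ⟨x, hx, rfl⟩ := Finset.mem_image.1 hy
        exact Nat.add_le_add_right (T.le_max' x hx) c
      · exact Finset.le_max' (T.image (· + c)) (T.max' h + c)
          (Finset.mem_image_of_mem _ (T.max'_mem h))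
    have herase : (T.image (· + c)).erase (T.max' h + c) = (T.erase (T.max' h)).image (· + c) :=
      (Finset.image_erase hinj T (T.max' h)).symm
    rw [topSum_succ k _ himg, hmax, herase, ih, topSum_succ k T h,
      Finset.card_erase_of_mem (T.max'_mem h)]
    have hcard : 1 ≤ T.card := Finset.card_pos.2 h
    have : min (k + 1) T.card = min k (T.card - 1) + 1 := by omega
    rw [this]
    ring

lemma topSum_le_min_mul (k : ℕ) : ∀ (T : Finset ℕ) (b : ℕ), (∀ x ∈ T, x ≤ b) →
    topSum k T ≤ min k T.card * b := by
  induction k with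
  | zero => intro T b _; simp [topSum_zero]
  | succ k ih =>
    intro T b hb
    rcases T.eq_empty_or_nonempty with rfl | h
    · simp [topSum_empty]
    rw [topSum_succ k T h]
    have h1 : T.max' h ≤ b := hb _ (T.max'_mem h)
    have h2 := ih (T.erase (T.max' h)) b (fun x hx => hb x (Finset.mem_of_mem_erase hx))
    rw [Finset.card_erase_of_mem (T.max'_mem h)] at h2
    have hcard : 1 ≤ T.card := Finset.card_pos.2 h
    have : min (k + 1) T.card = min k (T.card - 1) + 1 := by omega
    rw [this]
    calc T.max' h + topSum k (T.erase (T.max' h)) ≤ b + min k (T.card - 1) * b :=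
          Nat.add_le_add h1 h2
      _ = (min k (T.card - 1) + 1) * b := by ring

lemma core_ineq {n s' : ℕ} (α α' δ' b : ℕ) (P : Finset (Fin n)) (S : Fin n → Fin s' → Finset ℕ)
    (hSb : ∀ τ a' x, x ∈ S τ a' → 1 ≤ x ∧ x ≤ b)
    (hδ : ∀ τ ∈ P, δ' ≤ ∑ a', topSum α' (S τ a'))
    (Q : Fin s' → Finset ℕ)
    (hQ : ∀ τ ∈ P, ∀ a', (S τ a').image (· + (τ : ℕ) * b) ⊆ Q a') :
    δ' * topSum α (P.image fun τ : Fin n => (τ : ℕ) + 1) ≤ ∑ a', topSum (α * α') (Q a') := by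
  classical
  set PP := P.image (fun τ : Fin n => (τ : ℕ) + 1) with hPP
  obtain ⟨P₀, hP₀sub, hP₀card, hP₀sum⟩ := topSum_exists_subset α PP
  have hinj : Function.Injective (fun τ : Fin n => (τ : ℕ) + 1) := by
    intro a b' hab
    simpa [Fin.ext_iff] using hab
  set T₀ := P.filter (fun τ : Fin n => (τ : ℕ) + 1 ∈ P₀) with hT₀
  have hT₀P : T₀ ⊆ P := Finset.filter_subset _ _
  have himg : T₀.image (fun τ : Fin n => (τ : ℕ) + 1) = P₀ := by
    apply Finset.Subset.antisymm
    · intro p hp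
      obtain ⟨τ, hτ, rfl⟩ := Finset.mem_image.1 hp
      exact (Finset.mem_filter.1 hτ).2
    · intro p hp
      obtain ⟨τ, hτ, rfl⟩ := Finset.mem_image.1 (hP₀sub hp)
      exact Finset.mem_image.2 ⟨τ, Finset.mem_filter.2 ⟨hτ, hp⟩, rfl⟩
  have hcardT : T₀.card ≤ α := by
    rw [← Finset.card_image_of_injective T₀ hinj, himg] at *
    exact hP₀card
  -- choose top selections within each shifted chunk
  have hDex : ∀ (τ : Fin n) (a' : Fin s'), ∃ D ⊆ (S τ a').image (· + (τ : ℕ) * b),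
      D.card ≤ α' ∧ ∑ x ∈ D, x = topSum α' ((S τ a').image (· + (τ : ℕ) * b)) := by
    intro τ a'
    obtain ⟨D, h1, h2, h3⟩ := topSum_exists_subset α' ((S τ a').image (· + (τ : ℕ) * b))
    exact ⟨D, h1, h2, h3⟩
  choose D hDsub hDcard hDsum using hDex
  -- chunk elements lie in the interval (τ*b, (τ+1)*b]
  have hrange : ∀ τ a' x, x ∈ D τ a' → (τ : ℕ) * b < x ∧ x ≤ ((τ : ℕ) + 1) * b := by
    intro τ a' x hx
    obtain ⟨t, ht, rfl⟩ := Finset.mem_image.1 (hDsub τ a' hx)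
    obtain ⟨h1, h2⟩ := hSb τ a' t ht
    constructor <;> nlinarith
  -- per inner block a', the union of the chosen chunks bounds topSum (α*α') (Q a')
  have hU : ∀ a', ∑ τ ∈ T₀, topSum α' ((S τ a').image (· + (τ : ℕ) * b))
      ≤ topSum (α * α') (Q a') := by
    intro a'
    have hdisj : (↑T₀ : Set (Fin n)).PairwiseDisjoint (fun τ => D τ a') := by
      intro τ _ σ _ hne
      refine Finset.disjoint_left.2 fun x hxτ hxσ => ?_
      have h1 := hrange τ a' x hxτ
      have h2 := hrange σ a' x hxσ
      rcases lt_or_gt_of_ne (fun h : (τ : ℕ) = (σ : ℕ) => hne (Fin.ext h)) with h | h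
      · have : ((τ : ℕ) + 1) * b ≤ (σ : ℕ) * b := Nat.mul_le_mul_right b (by omega)
        omega
      · have : ((σ : ℕ) + 1) * b ≤ (τ : ℕ) * b := Nat.mul_le_mul_right b (by omega)
        omega
    have hsum : ∑ x ∈ T₀.biUnion (fun τ => D τ a'), x = ∑ τ ∈ T₀, ∑ x ∈ D τ a', x :=
      Finset.sum_biUnion hdisj
    have hsubQ : T₀.biUnion (fun τ => D τ a') ⊆ Q a' := by
      intro x hx
      obtain ⟨τ, hτ, hxD⟩ := Finset.mem_biUnion.1 hx
      exact hQ τ (hT₀P hτ) a' (hDsub τ a' hxD)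
    have hcardU : (T₀.biUnion (fun τ => D τ a')).card ≤ α * α' := by
      calc (T₀.biUnion (fun τ => D τ a')).card ≤ ∑ τ ∈ T₀, (D τ a').card :=
            Finset.card_biUnion_le
        _ ≤ ∑ _τ ∈ T₀, α' := Finset.sum_le_sum (fun τ _ => hDcard τ a')
        _ = T₀.card * α' := by rw [Finset.sum_const, smul_eq_mul]
        _ ≤ α * α' := Nat.mul_le_mul_right α' hcardT
    calc ∑ τ ∈ T₀, topSum α' ((S τ a').image (· + (τ : ℕ) * b))
        = ∑ τ ∈ T₀, ∑ x ∈ D τ a', x := by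
          exact Finset.sum_congr rfl (fun τ _ => (hDsum τ a').symm)
      _ = ∑ x ∈ T₀.biUnion (fun τ => D τ a'), x := hsum.symm
      _ ≤ topSum (α * α') (Q a') := sum_le_topSum _ _ _ hsubQ hcardU
  -- per outer column τ ∈ T₀: (τ+1)*δ' ≤ sum over a' of the shifted chunk topsums
  have hper : ∀ τ ∈ T₀, ((τ : ℕ) + 1) * δ'
      ≤ ∑ a', topSum α' ((S τ a').image (· + (τ : ℕ) * b)) := by
    intro τ hτ
    have hτP : τ ∈ P := hT₀P hτ
    have hshift : ∀ a' : Fin s', topSum α' ((S τ a').image (· + (τ : ℕ) * b))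
        = topSum α' (S τ a') + min α' (S τ a').card * ((τ : ℕ) * b) :=
      fun a' => topSum_image_add α' (S τ a') _
    set W := ∑ a', topSum α' (S τ a') with hW
    set M := ∑ a' : Fin s', min α' (S τ a').card with hM
    have heq : ∑ a', topSum α' ((S τ a').image (· + (τ : ℕ) * b))
        = W + M * ((τ : ℕ) * b) := by
      rw [Finset.sum_congr rfl (fun a' _ => hshift a'), Finset.sum_add_distrib,
        ← Finset.sum_mul]
    have hδW : δ' ≤ W := hδ τ hτP
    have hWM : W ≤ M * b := by
      rw [hW, hM, Finset.sum_mul]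
      exact Finset.sum_le_sum (fun a' _ =>
        topSum_le_min_mul α' (S τ a') b (fun x hx => (hSb τ a' x hx).2))
    have hδMb : δ' ≤ M * b := hδW.trans hWM
    calc ((τ : ℕ) + 1) * δ' = δ' + (τ : ℕ) * δ' := by ring
      _ ≤ W + (τ : ℕ) * (M * b) := Nat.add_le_add hδW (Nat.mul_le_mul_left _ hδMb)
      _ = W + M * ((τ : ℕ) * b) := by ring
      _ = _ := heq.symm
  -- combine
  calc δ' * topSum α PP = δ' * ∑ p ∈ P₀, p := by rw [hP₀sum]
    _ = ∑ p ∈ P₀, δ' * p := Finset.mul_sum _ _ _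
    _ = ∑ τ ∈ T₀, δ' * ((τ : ℕ) + 1) := by
        rw [← himg, Finset.sum_image (fun a _ c _ h => hinj h)]
    _ ≤ ∑ τ ∈ T₀, ∑ a', topSum α' ((S τ a').image (· + (τ : ℕ) * b)) :=
        Finset.sum_le_sum (fun τ hτ => by rw [Nat.mul_comm]; exact hper τ hτ)
    _ = ∑ a', ∑ τ ∈ T₀, topSum α' ((S τ a').image (· + (τ : ℕ) * b)) := Finset.sum_comm
    _ ≤ ∑ a', topSum (α * α') (Q a') := Finset.sum_le_sum (fun a' _ => hU a')

def pairFin {p q : ℕ} (a : Fin p) (b : Fin q) : Fin (p * q) :=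
  ⟨(a : ℕ) * q + (b : ℕ), by
    calc (a : ℕ) * q + (b : ℕ) < (a : ℕ) * q + q := by omega
      _ = ((a : ℕ) + 1) * q := by ring
      _ ≤ p * q := Nat.mul_le_mul_right q a.isLt⟩

lemma unpair1_pair {p q : ℕ} (a : Fin p) (b : Fin q) : unpair1 (pairFin a b) = a := by
  have hq : 0 < q := lt_of_le_of_lt (Nat.zero_le _) b.isLt
  apply Fin.ext
  show ((a : ℕ) * q + (b : ℕ)) / q = a
  rw [Nat.mul_comm (a : ℕ) q, Nat.mul_add_div hq, Nat.div_eq_of_lt b.isLt]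
  omega

lemma unpair2_pair {p q : ℕ} (a : Fin p) (b : Fin q) : unpair2 (pairFin a b) = b := by
  apply Fin.ext
  show ((a : ℕ) * q + (b : ℕ)) % q = b
  rw [Nat.mul_comm (a : ℕ) q, Nat.mul_add_mod, Nat.mod_eq_of_lt b.isLt]

lemma pair_unpair {p q : ℕ} (c : Fin (p * q)) : pairFin (unpair1 c) (unpair2 c) = c := by
  apply Fin.ext
  show (c : ℕ) / q * q + (c : ℕ) % q = c
  rw [Nat.mul_comm]
  exact Nat.div_add_mod _ _

/-- Reindexing a sum over `Fin (p*q)` as a double sum. -/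
lemma sum_pair_reindex {M : Type*} [AddCommMonoid M] {p q : ℕ} (f : Fin (p * q) → M) :
    ∑ c, f c = ∑ a : Fin p, ∑ b : Fin q, f (pairFin a b) := by
  have := (Fintype.sum_bijective (fun ab : Fin p × Fin q => pairFin ab.1 ab.2)
    ⟨fun ab cd h => by
        have h1 := congrArg unpair1 h
        have h2 := congrArg unpair2 h
        rw [unpair1_pair, unpair1_pair] at h1
        rw [unpair2_pair, unpair2_pair] at h2
        exact Prod.ext h1 h2,
      fun c => ⟨(unpair1 c, unpair2 c), pair_unpair c⟩⟩
    (fun ab => f (pairFin ab.1 ab.2)) f (fun ab => rfl))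
  rw [← this, Fintype.sum_prod_type]

lemma kmono_le (r : ℕ) (k' : ℕ → ℕ) (hmono : ∀ u, u < r → k' u < k' (u + 1)) :
    ∀ a b : ℕ, a ≤ b → b ≤ r → k' a ≤ k' b := by
  intro a b
  induction b with
  | zero =>
    intro h _
    obtain rfl := Nat.le_zero.mp h
    exact le_refl _
  | succ b ih =>
    intro hab hbr
    rcases Nat.eq_or_lt_of_le hab with rfl | h
    · exact le_refl _
    · exact (ih (by omega) (by omega)).trans (hmono b (by omega)).le

lemma coeff_uniq (r : ℕ) (k' : ℕ → ℕ) (hmono : ∀ u, u < r → k' u < k' (u + 1))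
    (u u' : Fin r) (i : Fin (k' ((u : ℕ) + 1) - k' (u : ℕ)))
    (i' : Fin (k' ((u' : ℕ) + 1) - k' (u' : ℕ)))
    (h : k' (u : ℕ) + (i : ℕ) = k' (u' : ℕ) + (i' : ℕ)) : (u : ℕ) = (u' : ℕ) := by
  have hle := kmono_le r k' hmono
  have hi := i.isLt
  have hi' := i'.isLt
  have h1 : k' (u : ℕ) < k' ((u : ℕ) + 1) := hmono _ u.isLt
  have h1' : k' (u' : ℕ) < k' ((u' : ℕ) + 1) := hmono _ u'.isLt
  rcases Nat.lt_trichotomy (u : ℕ) (u' : ℕ) with hlt | he | hgt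
  · have := hle ((u : ℕ) + 1) (u' : ℕ) (by omega) (by have := u'.isLt; omega)
    omega
  · exact he
  · have := hle ((u' : ℕ) + 1) (u : ℕ) (by omega) (by have := u.isLt; omega)
    omega

lemma coeff_bound {s' n' r : ℕ} (k' : ℕ → ℕ) (hmono : ∀ u, u < r → k' u < k' (u + 1))
    (hkr : k' r = n' * s') (u : Fin r) (i : Fin (k' ((u : ℕ) + 1) - k' (u : ℕ))) :
    k' (u : ℕ) + (i : ℕ) < n' * s' := by
  have h1 : k' (u : ℕ) < k' ((u : ℕ) + 1) := hmono _ u.isLt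
  have h2 : k' ((u : ℕ) + 1) ≤ k' r :=
    kmono_le r k' hmono _ _ (by have := u.isLt; omega) (le_refl r)
  have := i.isLt
  omega

lemma sum_smul_ne_zero {F : Type*} [Field F] {s' n' r : ℕ} (k' : ℕ → ℕ)
    (hmono : ∀ u, u < r → k' u < k' (u + 1)) (hkr : k' r = n' * s')
    (v : ℕ → Fin s' → Fin n' → F)
    (hlin : LinearIndependent F (fun i : Fin (n' * s') => v (i : ℕ)))
    (c : (u : Fin r) → Fin (k' ((u : ℕ) + 1) - k' (u : ℕ)) → F)
    (u0 : Fin r) (i0 : Fin (k' ((u0 : ℕ) + 1) - k' (u0 : ℕ))) (h0 : c u0 i0 ≠ 0) :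
    (∑ u : Fin r, ∑ i, c u i • v (k' (u : ℕ) + (i : ℕ))) ≠ 0 := by
  intro hsum
  set N := n' * s' with hN
  have key : ∀ (u : Fin r) (i : Fin (k' ((u : ℕ) + 1) - k' (u : ℕ))),
      k' (u : ℕ) + (i : ℕ) < N := fun u i => coeff_bound k' hmono hkr u i
  set g : Fin N → F := fun j => ∑ u : Fin r, ∑ i : Fin (k' ((u : ℕ) + 1) - k' (u : ℕ)),
    if k' (u : ℕ) + (i : ℕ) = (j : ℕ) then c u i else 0 with hgdef
  have hg : ∑ j : Fin N, g j • v (j : ℕ)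
      = ∑ u : Fin r, ∑ i, c u i • v (k' (u : ℕ) + (i : ℕ)) := by
    calc ∑ j : Fin N, g j • v (j : ℕ)
        = ∑ j : Fin N, ∑ u : Fin r, ∑ i : Fin (k' ((u : ℕ) + 1) - k' (u : ℕ)),
            (if k' (u : ℕ) + (i : ℕ) = (j : ℕ) then c u i • v (j : ℕ) else 0) := by
          refine Finset.sum_congr rfl fun j _ => ?_
          rw [hgdef]
          simp only [Finset.sum_smul, ite_smul, zero_smul]
      _ = ∑ u : Fin r, ∑ i : Fin (k' ((u : ℕ) + 1) - k' (u : ℕ)), ∑ j : Fin N,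
            (if k' (u : ℕ) + (i : ℕ) = (j : ℕ) then c u i • v (j : ℕ) else 0) := by
          rw [Finset.sum_comm]
          exact Finset.sum_congr rfl fun u _ => Finset.sum_comm
      _ = ∑ u : Fin r, ∑ i : Fin (k' ((u : ℕ) + 1) - k' (u : ℕ)),
            c u i • v (k' (u : ℕ) + (i : ℕ)) := by
          refine Finset.sum_congr rfl fun u _ => Finset.sum_congr rfl fun i _ => ?_
          rw [Finset.sum_eq_single (⟨k' (u : ℕ) + (i : ℕ), key u i⟩ : Fin N)]
          · rw [if_pos rfl]
          · intro j _ hj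
            rw [if_neg]
            intro hc
            exact hj (Fin.ext hc.symm)
          · intro hmem
            exact absurd (Finset.mem_univ _) hmem
  have hall := Fintype.linearIndependent_iff.1 hlin g (by rw [hg, hsum])
  have hJ0 : g ⟨k' (u0 : ℕ) + (i0 : ℕ), key u0 i0⟩ = c u0 i0 := by
    simp only [hgdef]
    rw [Finset.sum_eq_single u0]
    · rw [Finset.sum_eq_single i0]
      · rw [if_pos rfl]
      · intro i _ hi
        rw [if_neg]
        intro hc
        exact hi (Fin.ext (by omega))
      · intro hmem
        exact absurd (Finset.mem_univ _) hmem
    · intro u _ hu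
      apply Finset.sum_eq_zero
      intro i _
      rw [if_neg]
      intro hc
      exact hu (Fin.ext (coeff_uniq r k' hmono u u0 i i0 hc))
    · intro hmem
      exact absurd (Finset.mem_univ _) hmem
  exact h0 (hJ0 ▸ hall _)

lemma sum_smul_mem_span {F : Type*} [Field F] {s' n' r : ℕ} (k' : ℕ → ℕ)
    (hmono : ∀ u, u < r → k' u < k' (u + 1))
    (v : ℕ → Fin s' → Fin n' → F)
    (c : (u : Fin r) → Fin (k' ((u : ℕ) + 1) - k' (u : ℕ)) → F) (u0 : Fin r)
    (hz : ∀ u : Fin r, u0 < u → c u = 0) :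
    (∑ u : Fin r, ∑ i, c u i • v (k' (u : ℕ) + (i : ℕ))) ∈
      Submodule.span F (v '' {i | i < k' ((u0 : ℕ) + 1)}) := by
  apply Submodule.sum_mem
  intro u _
  by_cases hu : u0 < u
  · rw [hz u hu]
    simp
  · apply Submodule.sum_mem
    intro i _
    apply Submodule.smul_mem
    apply Submodule.subset_span
    refine ⟨k' (u : ℕ) + (i : ℕ), ?_, rfl⟩
    have h1 : k' (u : ℕ) < k' ((u : ℕ) + 1) := hmono _ u.isLt
    have h2 : k' ((u : ℕ) + 1) ≤ k' ((u0 : ℕ) + 1) := by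
      apply kmono_le r k' hmono
      · have : (u : ℕ) ≤ (u0 : ℕ) := by
          have := Fin.not_lt.mp hu
          exact Fin.le_def.mp this
        omega
      · have := u0.isLt; omega
    have := i.isLt
    simp only [Set.mem_setOf_eq]
    omega

/-- Generalized Blokh–Zyablov concatenation: given a chain of inner linear
`[s',n',α',k'_u,δ'_u]_q`-spaces (spanned by the first `k'_u` of linearly independent vectors
`v_1, v_2, …`) and outer `((s,n),α,K_u,δ_u)_{q^{e_u}}`-spaces, the concatenated space `N` is
an `((ss',nn'),αα',K_1⋯K_r,δ)_q`-space with `δ ≥ min_{u, |N_u|>1} δ_u δ'_u`. -/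
theorem blokh_zyablov_concatenation (q : ℕ) (F : Type*) [Field F] [Fintype F] [DecidableEq F]
    (hq : Fintype.card F = q) (s n s' n' α α' r : ℕ)
    (hs : 1 ≤ s) (hn : 1 ≤ n) (hs' : 1 ≤ s') (hn' : 1 ≤ n') (hα : 1 ≤ α) (hα' : 1 ≤ α')
    (hr : 1 ≤ r) (k' : ℕ → ℕ) (hk0 : k' 0 = 0) (hmono : ∀ u, u < r → k' u < k' (u + 1))
    (hkr : k' r = n' * s') (v : ℕ → Fin s' → Fin n' → F)
    (hlin : LinearIndependent F (fun i : Fin (n' * s') => v (i : ℕ)))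
    (htop : Submodule.span F (v '' {i | i < k' r}) = ⊤)
    (δ' : ℕ → ℕ)
    (hδ' : ∀ u : ℕ, 1 ≤ u → u ≤ r →
      (∀ w ∈ Submodule.span F (v '' {i | i < k' u}), w ≠ 0 → δ' u ≤ muWt α' w) ∧
      (∃ w ∈ Submodule.span F (v '' {i | i < k' u}), w ≠ 0 ∧ muWt α' w = δ' u))
    (Nout : (u : Fin r) → Set (Fin s → Fin n → (Fin (k' ((u : ℕ) + 1) - k' (u : ℕ)) → F)))
    (K : Fin r → ℕ) (hfin : ∀ u, (Nout u).Finite)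
    (hK : ∀ u, (Nout u).ncard = K u ∧ (Nout u).Nonempty)
    (δo : Fin r → ℕ)
    (hδo : ∀ u, (∀ A ∈ Nout u, ∀ B ∈ Nout u, A ≠ B → δo u ≤ muWt α (A - B)) ∧
      (1 < K u → ∃ A ∈ Nout u, ∃ B ∈ Nout u, A ≠ B ∧ muWt α (A - B) = δo u)) :
    (concatSet F r k' v Nout).ncard = ∏ u, K u ∧
      ∀ z ∈ concatSet F r k' v Nout, ∀ z' ∈ concatSet F r k' v Nout, z ≠ z' →
        ∃ u : Fin r, 1 < K u ∧ δo u * δ' ((u : ℕ) + 1) ≤ muWt (α * α') (z - z') := by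
  -- the ambient type of outer tuples
  set X := (u : Fin r) → (Fin s → Fin n → (Fin (k' ((u : ℕ) + 1) - k' (u : ℕ)) → F)) with hX
  set Φ : X → (Fin (s * s') → Fin (n * n') → F) :=
    fun x => ∑ u : Fin r, phiMap F v (k' (u : ℕ)) (x u) with hΦ
  -- pointwise evaluation of the difference of two concatenated words
  have heval : ∀ (x x' : X) (c : Fin (s * s')) (d : Fin (n * n')),
      (Φ x - Φ x') c d = (∑ u : Fin r, ∑ i, (x u (unpair1 c) (unpair1 d) i
        - x' u (unpair1 c) (unpair1 d) i) • v (k' (u : ℕ) + (i : ℕ)))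
        (unpair2 c) (unpair2 d) := by
    intro x x' c d
    simp only [hΦ, Pi.sub_apply, Finset.sum_apply, phiMap, Pi.smul_apply, smul_eq_mul, sub_mul,
      Finset.sum_sub_distrib]
  -- injectivity of Φ
  have hinjΦ : Function.Injective Φ := by
    intro x x' h
    by_contra hne
    set U := Finset.univ.filter (fun u : Fin r => x u ≠ x' u) with hUdef
    have hUne : U.Nonempty := by
      obtain ⟨u, hu⟩ := Function.ne_iff.mp hne
      exact ⟨u, Finset.mem_filter.2 ⟨Finset.mem_univ _, hu⟩⟩
    set u0 := U.max' hUne with hu0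
    have hx0 : x u0 ≠ x' u0 := (Finset.mem_filter.1 (U.max'_mem hUne)).2
    obtain ⟨a, ha⟩ := Function.ne_iff.mp hx0
    obtain ⟨τ, hτ⟩ := Function.ne_iff.mp ha
    obtain ⟨i0, hi0⟩ := Function.ne_iff.mp hτ
    have hne0 := sum_smul_ne_zero k' hmono hkr v hlin
      (fun u i => x u a τ i - x' u a τ i) u0 i0 (sub_ne_zero.2 hi0)
    apply hne0
    funext a' τ'
    have hev := heval x x' (pairFin a a') (pairFin τ τ')
    rw [unpair1_pair, unpair2_pair, unpair1_pair, unpair2_pair] at hev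
    rw [h, sub_self] at hev
    simpa using hev.symm
  -- the concatenated set as an image
  have hconcat : concatSet F r k' v Nout = Φ '' (Set.univ.pi fun u => Nout u) := by
    ext z
    constructor
    · rintro ⟨x, hx, rfl⟩
      exact ⟨x, fun u _ => hx u, rfl⟩
    · rintro ⟨x, hx, rfl⟩
      exact ⟨x, fun u => hx u (Set.mem_univ u), rfl⟩
  constructor
  · -- cardinality
    have hpi : (Set.univ.pi fun u => Nout u)
        = ↑(Fintype.piFinset fun u => (hfin u).toFinset) := by
      ext x
      simp [Set.mem_pi, Fintype.mem_piFinset, Set.Finite.mem_toFinset]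
    rw [hconcat, Set.ncard_image_of_injective _ hinjΦ, hpi, Set.ncard_coe_finset,
      Fintype.card_piFinset]
    exact Finset.prod_congr rfl fun u _ => by
      rw [← (hK u).1, Set.ncard_eq_toFinset_card _ (hfin u)]
  · -- minimum distance
    rintro z ⟨x, hx, rfl⟩ z' ⟨x', hx', rfl⟩ hzz'
    have hxne : x ≠ x' := fun h => hzz' (by rw [h])
    set U := Finset.univ.filter (fun u : Fin r => x u ≠ x' u) with hUdef
    have hUne : U.Nonempty := by
      obtain ⟨u, hu⟩ := Function.ne_iff.mp hxne
      exact ⟨u, Finset.mem_filter.2 ⟨Finset.mem_univ _, hu⟩⟩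
    set u0 := U.max' hUne with hu0
    have hx0 : x u0 ≠ x' u0 := (Finset.mem_filter.1 (U.max'_mem hUne)).2
    have hmax : ∀ u : Fin r, u0 < u → x u = x' u := by
      intro u hu
      by_contra hne
      exact absurd (U.le_max' u (Finset.mem_filter.2 ⟨Finset.mem_univ _, hne⟩))
        (not_le.2 hu)
    refine ⟨u0, ?_, ?_⟩
    · rw [← (hK u0).1]
      exact (Set.one_lt_ncard (hfin u0)).2 ⟨x u0, hx u0, x' u0, hx' u0, hx0⟩
    · have hδo1 : δo u0 ≤ muWt α (x u0 - x' u0) :=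
        (hδo u0).1 _ (hx u0) _ (hx' u0) hx0
      set Z := Φ x - Φ x' with hZ
      set δ'' := δ' ((u0 : ℕ) + 1) with hδ''
      -- inner words
      have hpera : ∀ a : Fin s, δ'' * muBlock α ((x u0 - x' u0) a)
          ≤ ∑ a' : Fin s', muBlock (α * α') (Z (pairFin a a')) := by
        intro a
        -- the inner concatenated word at outer column τ
        set wv : Fin n → (Fin s' → Fin n' → F) := fun τ =>
          ∑ u : Fin r, ∑ i, (x u a τ i - x' u a τ i) • v (k' (u : ℕ) + (i : ℕ)) with hwv
        have hZw : ∀ (τ : Fin n) (a' : Fin s') (τ' : Fin n'),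
            Z (pairFin a a') (pairFin τ τ') = wv τ a' τ' := by
          intro τ a' τ'
          have hev := heval x x' (pairFin a a') (pairFin τ τ')
          rw [unpair1_pair, unpair2_pair, unpair1_pair, unpair2_pair] at hev
          exact hev
        simp only [muBlock]
        refine core_ineq α α' δ'' n'
          (P := Finset.univ.filter (fun τ : Fin n => (x u0 - x' u0) a τ ≠ 0))
          (S := fun τ a' => (Finset.univ.filter (fun τ' : Fin n' => wv τ a' τ' ≠ 0)).image
            (fun τ' : Fin n' => (τ' : ℕ) + 1))
          ?_ ?_ _ ?_
        · -- hSb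
          intro τ a' t ht
          obtain ⟨τ', _, rfl⟩ := Finset.mem_image.1 ht
          exact ⟨by omega, by have := τ'.isLt; omega⟩
        · -- hδ
          intro τ hτ
          have hyne : (x u0 - x' u0) a τ ≠ 0 := (Finset.mem_filter.1 hτ).2
          obtain ⟨i0, hi0⟩ := Function.ne_iff.mp hyne
          have hwne : wv τ ≠ 0 := by
            rw [hwv]
            exact sum_smul_ne_zero k' hmono hkr v hlin
              (fun u i => x u a τ i - x' u a τ i) u0 i0 (by simpa using hi0)
          have hwspan : wv τ ∈ Submodule.span F (v '' {i | i < k' ((u0 : ℕ) + 1)}) := by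
            rw [hwv]
            refine sum_smul_mem_span k' hmono v _ u0 ?_
            intro u hu
            funext i
            rw [hmax u hu]
            simp
          have hlow := (hδ' ((u0 : ℕ) + 1) (by omega)
            (by have := u0.isLt; omega)).1 (wv τ) hwspan hwne
          calc δ'' ≤ muWt α' (wv τ) := hlow
            _ = ∑ a' : Fin s', topSum α'
                ((Finset.univ.filter (fun τ' : Fin n' => wv τ a' τ' ≠ 0)).image
                  (fun τ' : Fin n' => (τ' : ℕ) + 1)) := by
                simp only [muWt, muBlock]
        · -- hQ
          intro τ hτ a' t ht
          obtain ⟨t', ht', rfl⟩ := Finset.mem_image.1 ht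
          obtain ⟨τ', hτ', rfl⟩ := Finset.mem_image.1 ht'
          have hne' : wv τ a' τ' ≠ 0 := (Finset.mem_filter.1 hτ').2
          refine Finset.mem_image.2 ⟨pairFin τ τ', Finset.mem_filter.2
            ⟨Finset.mem_univ _, ?_⟩, ?_⟩
          · rw [hZw τ a' τ']
            exact hne'
          · show (τ : ℕ) * n' + (τ' : ℕ) + 1 = (τ' : ℕ) + 1 + (τ : ℕ) * n'
            ring
      calc δo u0 * δ'' ≤ muWt α (x u0 - x' u0) * δ'' := Nat.mul_le_mul_right _ hδo1
        _ = δ'' * muWt α (x u0 - x' u0) := Nat.mul_comm _ _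
        _ = ∑ a : Fin s, δ'' * muBlock α ((x u0 - x' u0) a) := by
            rw [muWt, Finset.mul_sum]
        _ ≤ ∑ a : Fin s, ∑ a' : Fin s', muBlock (α * α') (Z (pairFin a a')) :=
            Finset.sum_le_sum fun a _ => hpera a
        _ = ∑ c : Fin (s * s'), muBlock (α * α') (Z c) :=
            (sum_pair_reindex (fun c => muBlock (α * α') (Z c))).symm
        _ = muWt (α * α') (Z) := rfl
end
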